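/- arXiv:2504.13804 — 6 statements merged into one kernel-verified Lean document; each statement's English description precedes it below -/
import Mathlib

section
/- Let p and q be probability mass functions on a finite type such that q_i > 0 whenever p_i > 0. Then (C(p) − C(q))² ≤ 18 · d_KL(p, q), where d_KL(p, q) = Σ_{i : p_i > 0} p_i · log(p_i / q_i) is the Kullback–Leibler divergence. -/
open scoped Classical

private lemma key_pt {p q : ℝ} (hp : 0 < p) (hq : 0 < q) :
    (p - q)^2 ≤ (p * Real.log (p/q) - p + q) * (2*(p+q)) := by
  set a := Real.sqrt p with ha
  set b := Real.sqrt q with hb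
  have ha0 : 0 < a := Real.sqrt_pos.2 hp
  have hb0 : 0 < b := Real.sqrt_pos.2 hq
  have hap : a^2 = p := Real.sq_sqrt hp.le
  have hbq : b^2 = q := Real.sq_sqrt hq.le
  have hlog : Real.log (p/q) = 2 * Real.log (a/b) := by
    rw [← hap, ← hbq, ← div_pow, Real.log_pow]; push_cast; ring
  have hl : 1 - (a/b)⁻¹ ≤ Real.log (a/b) :=
    Real.one_sub_inv_le_log_of_pos (div_pos ha0 hb0)
  have hinv : (a/b)⁻¹ = b/a := by field_simp
  rw [hinv] at hl
  have h1 : p * (2 * (1 - b/a)) ≤ p * Real.log (p/q) := by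
    rw [hlog]; nlinarith [hp]
  have h2 : p * (2 * (1 - b/a)) = 2*a^2 - 2*a*b := by
    rw [← hap]; field_simp
  nlinarith [sq_nonneg (a-b), sq_nonneg (a+b), sq_nonneg (a*b - b^2), mul_pos ha0 hb0]

/-- For probability mass functions `p` and `q` on a finite type with
`p` absolutely continuous w.r.t. `q` (i.e. `q i > 0` whenever `p i > 0`),
`(C(p) - C(q))² ≤ 18 · d_KL(p, q)`, where `C(p) = Σ_i (p i)^2` and
`d_KL(p, q) = Σ_{i : p i > 0} p i · log (p i / q i)`. -/
theorem collision_prob_sq_diff_le_KL {α : Type*} [Fintype α] (p q : α → ℝ)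
    (hp0 : ∀ i, 0 ≤ p i) (hp1 : ∑ i, p i = 1)
    (hq0 : ∀ i, 0 ≤ q i) (hq1 : ∑ i, q i = 1)
    (hac : ∀ i, 0 < p i → 0 < q i) :
    ((∑ i, (p i) ^ 2) - ∑ i, (q i) ^ 2) ^ 2
      ≤ 18 * ∑ i ∈ Finset.univ.filter (fun i => 0 < p i), p i * Real.log (p i / q i) := by
  classical
  set S := Finset.univ.filter (fun i => 0 < p i) with hS
  set KL := ∑ i ∈ S, p i * Real.log (p i / q i) with hKL
  set f : α → ℝ := fun i =>
    if 0 < p i then p i * Real.log (p i / q i) - p i + q i else q i with hf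
  -- zero of p off S
  have hpz : ∀ i ∉ S, p i = 0 := by
    intro i hi
    simp only [hS, Finset.mem_filter, Finset.mem_univ, true_and, not_lt] at hi
    exact le_antisymm hi (hp0 i)
  -- pointwise key inequality
  have hpt : ∀ i, (p i - q i)^2 ≤ f i * (2*(p i + q i)) := by
    intro i
    by_cases h : 0 < p i
    · simpa [hf, h] using key_pt h (hac i h)
    · have hp : p i = 0 := le_antisymm (not_lt.1 h) (hp0 i)
      have : f i = q i := by simp [hf, h]
      rw [this, hp]
      nlinarith [hq0 i]
  -- f nonneg
  have hf0 : ∀ i, 0 ≤ f i := by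
    intro i
    by_cases h : 0 < p i
    · have hq := hac i h
      have h2 : 0 < 2*(p i + q i) := by linarith
      nlinarith [hpt i, sq_nonneg (p i - q i)]
    · simpa [hf, h] using hq0 i
  -- sum of f equals KL
  have hsum : ∑ i, f i = KL := by
    have hsplit := Finset.sum_filter_add_sum_filter_not Finset.univ (fun i => 0 < p i) f
    have h1 : ∑ i ∈ S, f i = KL - (∑ i ∈ S, p i) + ∑ i ∈ S, q i := by
      rw [hKL, ← Finset.sum_sub_distrib, ← Finset.sum_add_distrib]
      apply Finset.sum_congr rfl
      intro i hi
      have : 0 < p i := (Finset.mem_filter.1 hi).2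
      simp [hf, this]
    have h2 : ∑ i ∈ Finset.univ.filter (fun i => ¬ 0 < p i), f i
        = ∑ i ∈ Finset.univ.filter (fun i => ¬ 0 < p i), q i := by
      apply Finset.sum_congr rfl
      intro i hi
      have : ¬ 0 < p i := (Finset.mem_filter.1 hi).2
      simp [hf, this]
    have hps : ∑ i ∈ S, p i = 1 := by
      rw [← hp1]
      exact (Finset.sum_subset (Finset.subset_univ S) (fun i _ hi => hpz i hi)).symm ▸ rfl
    have hqs : ∑ i ∈ S, q i + ∑ i ∈ Finset.univ.filter (fun i => ¬ 0 < p i), q i = 1 := by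
      rw [Finset.sum_filter_add_sum_filter_not Finset.univ (fun i => 0 < p i) q, hq1]
    calc ∑ i, f i = ∑ i ∈ S, f i + ∑ i ∈ Finset.univ.filter (fun i => ¬ 0 < p i), f i := by
          rw [hsplit]
      _ = KL := by rw [h1, h2, hps]; linarith [hqs]
  -- L1 distance bounded by sum of sqrt terms
  have hL1 : ∑ i, |p i - q i| ≤ ∑ i, Real.sqrt (f i * (2*(p i + q i))) := by
    apply Finset.sum_le_sum
    intro i _
    rw [← Real.sqrt_sq_eq_abs]
    exact Real.sqrt_le_sqrt (hpt i)
  -- Cauchy-Schwarz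
  have hg0 : ∀ i, (0:ℝ) ≤ 2*(p i + q i) := by
    intro i; have := hp0 i; have := hq0 i; linarith
  have hcs : (∑ i, Real.sqrt (f i * (2*(p i + q i))))^2
      ≤ (∑ i, f i) * (∑ i, 2*(p i + q i)) :=
    Finset.sum_sq_le_sum_mul_sum_of_sq_eq_mul Finset.univ
      (fun i _ => hf0 i) (fun i _ => hg0 i)
      (fun i _ => Real.sq_sqrt (mul_nonneg (hf0 i) (hg0 i)))
  have hgsum : (∑ i, 2*(p i + q i)) = 4 := by
    rw [← Finset.mul_sum, Finset.sum_add_distrib, hp1, hq1]; norm_num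
  have hKL0 : 0 ≤ KL := by
    rw [← hsum]; exact Finset.sum_nonneg fun i _ => hf0 i
  have hcs' : (∑ i, Real.sqrt (f i * (2*(p i + q i))))^2 ≤ 4 * KL := by
    rw [hsum, hgsum] at hcs; linarith
  -- collision probability difference bounded by L1
  have hp1' : ∀ i, p i ≤ 1 := by
    intro i
    rw [← hp1]
    exact Finset.single_le_sum (fun j _ => hp0 j) (Finset.mem_univ i)
  have hq1' : ∀ i, q i ≤ 1 := by
    intro i
    rw [← hq1]
    exact Finset.single_le_sum (fun j _ => hq0 j) (Finset.mem_univ i)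
  have hCrw : (∑ i, (p i)^2) - ∑ i, (q i)^2 = ∑ i, (p i - q i) * (p i + q i - 1) := by
    have : ∑ i, (p i - q i) * (p i + q i - 1)
        = (∑ i, (p i)^2) - (∑ i, (q i)^2) - ((∑ i, p i) - (∑ i, q i)) := by
      rw [← Finset.sum_sub_distrib, ← Finset.sum_sub_distrib, ← Finset.sum_sub_distrib]
      apply Finset.sum_congr rfl
      intro i _; ring
    rw [this, hp1, hq1]; ring
  have hC : |(∑ i, (p i)^2) - ∑ i, (q i)^2| ≤ ∑ i, |p i - q i| := by
    rw [hCrw]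
    calc |∑ i, (p i - q i) * (p i + q i - 1)| ≤ ∑ i, |(p i - q i) * (p i + q i - 1)| :=
          Finset.abs_sum_le_sum_abs _ _
      _ ≤ ∑ i, |p i - q i| := by
          apply Finset.sum_le_sum
          intro i _
          rw [abs_mul]
          have h1 : |p i + q i - 1| ≤ 1 := by
            rw [abs_le]
            constructor
            · have := hp0 i; have := hq0 i; linarith
            · have := hp1' i; have := hq1' i; linarith
          calc |p i - q i| * |p i + q i - 1| ≤ |p i - q i| * 1 :=
                mul_le_mul_of_nonneg_left h1 (abs_nonneg _)
            _ = |p i - q i| := mul_one _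
  -- put it together
  have hL10 : 0 ≤ ∑ i, |p i - q i| := Finset.sum_nonneg fun i _ => abs_nonneg _
  have hfin : ((∑ i, (p i)^2) - ∑ i, (q i)^2)^2 ≤ 4 * KL := by
    calc ((∑ i, (p i)^2) - ∑ i, (q i)^2)^2 = |(∑ i, (p i)^2) - ∑ i, (q i)^2|^2 := (sq_abs _).symm
      _ ≤ (∑ i, |p i - q i|)^2 := pow_le_pow_left₀ (abs_nonneg _) hC 2
      _ ≤ (∑ i, Real.sqrt (f i * (2*(p i + q i))))^2 :=
          pow_le_pow_left₀ hL10 hL1 2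
      _ ≤ 4 * KL := hcs'
  linarith [hfin, hKL0]
end

section
/- Let (X_i)_{i ≥ 1} be an i.i.d. sequence of random variables on a probability space taking values in a finite type α, each with probability mass function p. Define g(x, y) = 1{x = y} − p(y) − p(x) + C(p), and for m ≥ 1 let Ū_m = Σ_{i=1}^m Σ_{j=1}^{i−1} g(X_i, X_j). Then (Ū_m)_{m ≥ 1} is a martingale with respect to the filtration F_m = σ(X_1, ..., X_m); in particular, E[Σ_{j=1}^{m−1} g(X_m, X_j) | F_{m−1}] = 0 for every m ≥ 2. -/
open MeasureTheory ProbabilityTheory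

/-- Let `(X_i)_{i ≥ 1}` be an i.i.d. sequence with values in a finite type
`α`, each with pmf `p`. With the degenerate kernel
`g(x, y) = 1{x = y} - p y - p x + C(p)` (where `C(p) = Σ_z (p z)^2`) and
`Ū_m = Σ_{i=1}^m Σ_{j=1}^{i-1} g(X_i, X_j)`, the process `(Ū_m)` is a martingale with
respect to the natural filtration `F_m = σ(X_1, ..., X_m)`; in particular
`E[Σ_{j=1}^{m-1} g(X_m, X_j) | F_{m-1}] = 0` a.s. for every `m ≥ 2`. -/
theorem decoupled_collision_process_martingale
    {Ω : Type*} {mΩ : MeasurableSpace Ω} (μ : Measure Ω) [IsProbabilityMeasure μ]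
    {α : Type*} [Fintype α] [DecidableEq α] [MeasurableSpace α] [MeasurableSingletonClass α]
    (p : α → ℝ) (hp0 : ∀ a, 0 ≤ p a) (hp1 : ∑ a, p a = 1)
    (X : ℕ → Ω → α) (hXmeas : ∀ i, Measurable (X i))
    (hindep : iIndepFun X μ)
    (hlaw : ∀ i a, μ {ω | X i ω = a} = ENNReal.ofReal (p a))
    (g : α → α → ℝ)
    (hg : ∀ x y, g x y = (if x = y then (1 : ℝ) else 0) - p y - p x + ∑ z, (p z) ^ 2)
    (ℱ : Filtration ℕ mΩ)
    (hℱ : ∀ m, ℱ m = ⨆ i ∈ Finset.Icc 1 m, MeasurableSpace.comap (X i) inferInstance)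
    (U : ℕ → Ω → ℝ)
    (hU : ∀ m ω, U m ω =
      ∑ i ∈ Finset.Icc 1 m, ∑ j ∈ Finset.Icc 1 (i - 1), g (X i ω) (X j ω)) :
    Martingale U ℱ μ ∧
      ∀ m, 2 ≤ m →
        μ[(fun ω => ∑ j ∈ Finset.Icc 1 (m - 1), g (X m ω) (X j ω)) | ℱ (m - 1)]
          =ᵐ[μ] 0 := by
  classical
  have hmeasF : ∀ (F : α → α → ℝ) (i j : ℕ), Measurable fun ω => F (X i ω) (X j ω) := by
    intro F i j
    exact (measurable_of_finite (fun q : α × α => F q.1 q.2)).comp ((hXmeas i).prodMk (hXmeas j))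
  have integ : ∀ (F : α → α → ℝ) (i j : ℕ), Integrable (fun ω => F (X i ω) (X j ω)) μ := by
    intro F i j
    refine (integrable_const (∑ a : α, ∑ b : α, |F a b|)).mono'
      (hmeasF F i j).aestronglyMeasurable (Filter.Eventually.of_forall fun ω => ?_)
    calc ‖F (X i ω) (X j ω)‖ = |F (X i ω) (X j ω)| := rfl
      _ ≤ ∑ b : α, |F (X i ω) b| :=
          Finset.single_le_sum (f := fun b => |F (X i ω) b|)
            (fun b _ => abs_nonneg _) (Finset.mem_univ _)
      _ ≤ ∑ a : α, ∑ b : α, |F a b| :=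
          Finset.single_le_sum (f := fun a => ∑ b : α, |F a b|)
            (fun a _ => Finset.sum_nonneg fun b _ => abs_nonneg _) (Finset.mem_univ _)
  have hcomap_le : ∀ {j n : ℕ}, j ∈ Finset.Icc 1 n →
      MeasurableSpace.comap (X j) inferInstance ≤ ℱ n := by
    intro j n hj
    rw [hℱ n]
    exact le_iSup₂ (f := fun i _ => MeasurableSpace.comap (X i) inferInstance) j hj
  have hgz : ∀ b, ∑ a, g a b * p a = 0 := by
    intro b
    simp only [hg, sub_mul, add_mul, ite_mul, one_mul, zero_mul, Finset.sum_sub_distrib,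
      Finset.sum_add_distrib, Finset.sum_ite_eq', Finset.mem_univ, if_true,
      ← Finset.sum_mul, ← Finset.mul_sum, hp1, one_mul, mul_one]
    have : ∑ a, p a * p a = ∑ z, p z ^ 2 := by simp [sq]
    linarith [this]
  have key : ∀ n k, k ∉ Finset.Icc 1 n →
      μ[(fun ω => ∑ j ∈ Finset.Icc 1 n, g (X k ω) (X j ω)) | ℱ n] =ᵐ[μ] 0 := by
    intro n k hk
    have hIndep : Indep (MeasurableSpace.comap (X k) inferInstance) (ℱ n) μ := by
      have h := indep_biSup_compl (fun i => (hXmeas i).comap_le) hindep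
        (↑(Finset.Icc 1 n) : Set ℕ)
      have h1 : (⨆ i ∈ (↑(Finset.Icc 1 n) : Set ℕ),
          MeasurableSpace.comap (X i) inferInstance) = ℱ n := by
        rw [hℱ n]; simp
      rw [h1] at h
      refine (indep_of_indep_of_le_right h ?_).symm
      exact le_iSup₂ (f := fun i (_ : i ∈ (↑(Finset.Icc 1 n) : Set ℕ)ᶜ) =>
        MeasurableSpace.comap (X i) inferInstance) k (by simpa using hk)
    have condI : ∀ a : α, μ[(fun ω => if X k ω = a then (1:ℝ) else 0) | ℱ n]
        =ᵐ[μ] fun _ => p a := by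
      intro a
      have hXk : Measurable[MeasurableSpace.comap (X k) inferInstance] (X k) :=
        Measurable.of_comap_le le_rfl
      have hsm : StronglyMeasurable[MeasurableSpace.comap (X k) inferInstance]
          (fun ω => if X k ω = a then (1:ℝ) else 0) :=
        ((measurable_of_finite (fun x : α => if x = a then (1:ℝ) else 0)).comp
          hXk).stronglyMeasurable
      refine (condExp_indep_eq ((hXmeas k).comap_le) (ℱ.le n) hsm hIndep).trans ?_
      have hs : MeasurableSet {ω | X k ω = a} := hXmeas k (measurableSet_singleton a)
      have heq : (fun ω => if X k ω = a then (1:ℝ) else 0)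
          = Set.indicator {ω | X k ω = a} (fun _ => (1:ℝ)) := by
        ext ω; by_cases h : X k ω = a <;> simp [Set.indicator, h]
      have : ∫ ω, (if X k ω = a then (1:ℝ) else 0) ∂μ = p a := by
        rw [heq, integral_indicator_const _ hs, measureReal_def, hlaw k a, ENNReal.toReal_ofReal (hp0 a)]
        simp
      rw [this]
    have hj0 : ∀ j ∈ Finset.Icc 1 n,
        μ[(fun ω => g (X k ω) (X j ω)) | ℱ n] =ᵐ[μ] 0 := by
      intro j hj
      set T : α × α → Ω → ℝ := fun q ω =>
        (g q.1 q.2 * (if X j ω = q.2 then (1:ℝ) else 0)) * (if X k ω = q.1 then (1:ℝ) else 0)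
        with hT
      have hfun : (fun ω => g (X k ω) (X j ω)) = ∑ q : α × α, T q := by
        ext ω
        rw [Finset.sum_apply]
        rw [Fintype.sum_prod_type]
        simp [hT, mul_ite, mul_one, mul_zero, ite_mul, zero_mul, Finset.sum_ite_eq,
          Finset.mem_univ]
      rw [hfun]
      have hint : ∀ q ∈ (Finset.univ : Finset (α × α)), Integrable (T q) μ := fun q _ =>
        integ (fun x y => (g q.1 q.2 * (if y = q.2 then (1:ℝ) else 0)) *
          (if x = q.1 then 1 else 0)) k j
      refine (condExp_finset_sum hint (ℱ n)).trans ?_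
      have hq : ∀ q : α × α, μ[T q | ℱ n] =ᵐ[μ]
          fun ω => (g q.1 q.2 * (if X j ω = q.2 then (1:ℝ) else 0)) * p q.1 := by
        intro q
        have hXj : Measurable[ℱ n] (X j) := Measurable.of_comap_le (hcomap_le hj)
        have hsm : StronglyMeasurable[ℱ n]
            (fun ω => g q.1 q.2 * (if X j ω = q.2 then (1:ℝ) else 0)) :=
          ((measurable_of_finite (fun x : α => g q.1 q.2 *
            (if x = q.2 then (1:ℝ) else 0))).comp hXj).stronglyMeasurable
        have hmul := condExp_mul_of_stronglyMeasurable_left hsm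
          (integ (fun x y => (g q.1 q.2 * (if y = q.2 then (1:ℝ) else 0)) *
            (if x = q.1 then 1 else 0)) k j)
          (integ (fun x _ => if x = q.1 then (1:ℝ) else 0) k j)
        refine hmul.trans ?_
        filter_upwards [condI q.1] with ω hω
        simp only [Pi.mul_apply, hω, hT]
      refine (eventuallyEq_sum fun q _ => hq q).trans ?_
      have hzero : (∑ q : α × α, fun ω =>
          (g q.1 q.2 * (if X j ω = q.2 then (1:ℝ) else 0)) * p q.1) = 0 := by
        ext ω
        rw [Finset.sum_apply, Fintype.sum_prod_type]
        have hb : ∀ a : α,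
            ∑ b : α, (g a b * (if X j ω = b then (1:ℝ) else 0)) * p a = g a (X j ω) * p a := by
          intro a
          simp [mul_ite, mul_one, mul_zero, ite_mul, zero_mul, Finset.sum_ite_eq,
            Finset.mem_univ]
        rw [Finset.sum_congr rfl fun a _ => hb a]
        simpa using hgz (X j ω)
      rw [hzero]
    have hintj : ∀ j ∈ Finset.Icc 1 n, Integrable (fun ω => g (X k ω) (X j ω)) μ :=
      fun j _ => integ g k j
    have hfun : (fun ω => ∑ j ∈ Finset.Icc 1 n, g (X k ω) (X j ω))
        = ∑ j ∈ Finset.Icc 1 n, fun ω => g (X k ω) (X j ω) := by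
      ext ω; rw [Finset.sum_apply]
    rw [hfun]
    refine (condExp_finset_sum hintj (ℱ n)).trans ?_
    refine (eventuallyEq_sum fun j hj => hj0 j hj).trans ?_
    simp
  have hUsm : ∀ n, StronglyMeasurable[ℱ n] (U n) := by
    intro n
    rw [show U n = fun ω => ∑ i ∈ Finset.Icc 1 n, ∑ j ∈ Finset.Icc 1 (i - 1),
      g (X i ω) (X j ω) from funext (hU n)]
    refine Measurable.stronglyMeasurable ?_
    refine Finset.measurable_sum _ fun i hi => Finset.measurable_sum _ fun j hj => ?_
    have hj' : j ∈ Finset.Icc 1 n := by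
      simp only [Finset.mem_Icc] at hi hj ⊢; omega
    have hXi : Measurable[ℱ n] (X i) := Measurable.of_comap_le (hcomap_le hi)
    have hXj : Measurable[ℱ n] (X j) := Measurable.of_comap_le (hcomap_le hj')
    exact (measurable_of_finite (fun q : α × α => g q.1 q.2)).comp (hXi.prodMk hXj)
  have hUint : ∀ n, Integrable (U n) μ := by
    intro n
    rw [show U n = fun ω => ∑ i ∈ Finset.Icc 1 n, ∑ j ∈ Finset.Icc 1 (i - 1),
      g (X i ω) (X j ω) from funext (hU n)]
    exact integrable_finset_sum _ fun i _ => integrable_finset_sum _ fun j _ => integ g i j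
  constructor
  · refine martingale_nat (fun n => hUsm n) hUint fun n => ?_
    have hDint : Integrable (fun ω => ∑ j ∈ Finset.Icc 1 n, g (X (n+1) ω) (X j ω)) μ :=
      integrable_finset_sum _ fun j _ => integ g (n+1) j
    have hsplit : U (n+1) = U n + fun ω => ∑ j ∈ Finset.Icc 1 n, g (X (n+1) ω) (X j ω) := by
      ext ω
      rw [Pi.add_apply, hU (n+1) ω, hU n ω,
        Finset.sum_Icc_succ_top (Nat.succ_le_succ (Nat.zero_le n))]
      simp
    have h1 : μ[U (n+1) | ℱ n] =ᵐ[μ] μ[U n | ℱ n] +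
        μ[(fun ω => ∑ j ∈ Finset.Icc 1 n, g (X (n+1) ω) (X j ω)) | ℱ n] := by
      rw [hsplit]
      exact condExp_add (hUint n) hDint (ℱ n)
    have hknot : n + 1 ∉ Finset.Icc 1 n := by simp
    refine (h1.trans ?_).symm
    filter_upwards [key n (n+1) hknot] with ω hω
    rw [Pi.add_apply, condExp_of_stronglyMeasurable (ℱ.le n) (hUsm n) (hUint n), hω]
    simp
  · intro m hm
    refine key (m - 1) m ?_
    simp only [Finset.mem_Icc]
    omega
end

section
/- Let q be a probability mass function on a finite type α (so Σ_x q_x = 1), let m > 0, and let (M_x)_{x ∈ α} be independent random variables with M_x distributed as Poisson(m · q_x). Then E[(Σ_x M_x²)²] ≤ m + 7m² + 6m³ · C(q) + m⁴ · C(q)², where C(q) = Σ_x q_x². -/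
open MeasureTheory ProbabilityTheory

lemma exp_tsum (l : ℝ) : Real.exp l = ∑' n : ℕ, l ^ n / n.factorial := by
  rw [Real.exp_eq_exp_ℝ, NormedSpace.exp_eq_tsum_div]

lemma term_shift (l : ℝ) (k j : ℕ) :
    l ^ (j + k) / ((j + k) : ℕ).factorial * (((j + k).descFactorial k : ℕ) : ℝ)
      = l ^ k * (l ^ j / j.factorial) := by
  have hfac : (j + k).descFactorial k * (j : ℕ).factorial = (j + k).factorial := by
    have := Nat.factorial_mul_descFactorial (show k ≤ j + k by omega)
    simpa [mul_comm] using this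
  have h1 : ((j + k).factorial : ℝ) ≠ 0 := Nat.cast_ne_zero.2 (Nat.factorial_ne_zero _)
  have h2 : ((j : ℕ).factorial : ℝ) ≠ 0 := Nat.cast_ne_zero.2 (Nat.factorial_ne_zero _)
  have hfd : ((j + k).descFactorial k : ℝ) = (j + k).factorial / j.factorial := by
    rw [eq_div_iff h2]; exact_mod_cast congrArg (Nat.cast (R := ℝ)) hfac
  rw [hfd, pow_add]
  field_simp

lemma range_add (k x : ℕ) (hx : x ∉ Set.range fun j : ℕ => j + k) : x < k := by
  by_contra h
  exact hx ⟨x - k, by simp; omega⟩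

lemma sumDF (l : ℝ) (k : ℕ) :
    Summable (fun n : ℕ => l ^ n / n.factorial * (n.descFactorial k : ℝ)) := by
  have hinj : Function.Injective (fun j : ℕ => j + k) := add_left_injective k
  have hzero : ∀ x ∉ Set.range (fun j : ℕ => j + k),
      l ^ x / x.factorial * (x.descFactorial k : ℝ) = 0 := fun x hx => by
    simp [Nat.descFactorial_eq_zero_iff_lt.2 (range_add k x hx)]
  rw [← hinj.summable_iff hzero]
  have heq : (fun n : ℕ => l ^ n / n.factorial * (n.descFactorial k : ℝ)) ∘ (fun j => j + k)
      = fun j : ℕ => l ^ k * (l ^ j / j.factorial) := funext fun j => term_shift l k j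
  rw [heq]
  exact (Real.summable_pow_div_factorial l).mul_left _

lemma tsumDF (l : ℝ) (k : ℕ) :
    ∑' n : ℕ, l ^ n / n.factorial * (n.descFactorial k : ℝ) = l ^ k * Real.exp l := by
  have hinj : Function.Injective (fun j : ℕ => j + k) := add_left_injective k
  have hsupp : Function.support (fun n : ℕ => l ^ n / n.factorial * (n.descFactorial k : ℝ))
      ⊆ Set.range (fun j : ℕ => j + k) := by
    intro x hx
    by_contra h
    exact hx (by simp [Nat.descFactorial_eq_zero_iff_lt.2 (range_add k x h)])
  rw [← hinj.tsum_eq hsupp]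
  calc ∑' j : ℕ, l ^ (j + k) / ((j + k) : ℕ).factorial * (((j + k).descFactorial k : ℕ) : ℝ)
      = ∑' j : ℕ, l ^ k * (l ^ j / j.factorial) := tsum_congr (term_shift l k)
    _ = l ^ k * Real.exp l := by rw [tsum_mul_left, ← exp_tsum]

lemma sq_eq (n : ℕ) : (n:ℝ)^2 = (n.descFactorial 2 : ℝ) + (n.descFactorial 1 : ℝ) := by
  rcases n with _ | n
  · simp
  · simp [Nat.descFactorial]
    ring

lemma pow4_eq (n : ℕ) : (n:ℝ)^4 = (n.descFactorial 4 : ℝ) + 6 * (n.descFactorial 3 : ℝ)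
    + 7 * (n.descFactorial 2 : ℝ) + (n.descFactorial 1 : ℝ) := by
  rcases n with _ | _ | _ | _ | n
  · simp
  · simp [Nat.descFactorial]
  · simp [Nat.descFactorial]; norm_num
  · simp [Nat.descFactorial]; norm_num
  · simp [Nat.descFactorial]
    ring

lemma poisson_summable2 (l : ℝ) :
    Summable (fun n : ℕ => Real.exp (-l) * l ^ n / n.factorial * (n:ℝ)^2) := by
  apply Summable.congr (((sumDF l 2).mul_left (Real.exp (-l))).add
    ((sumDF l 1).mul_left (Real.exp (-l))))
  intro n
  rw [sq_eq n]; ring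

lemma poisson_tsum2 (l : ℝ) :
    ∑' n : ℕ, Real.exp (-l) * l ^ n / n.factorial * (n:ℝ)^2 = l + l^2 := by
  have h : ∀ n : ℕ, Real.exp (-l) * l ^ n / n.factorial * (n:ℝ)^2
      = Real.exp (-l) * (l ^ n / n.factorial * (n.descFactorial 2 : ℝ))
        + Real.exp (-l) * (l ^ n / n.factorial * (n.descFactorial 1 : ℝ)) := by
    intro n; rw [sq_eq n]; ring
  rw [tsum_congr h, Summable.tsum_add ((sumDF l 2).mul_left _) ((sumDF l 1).mul_left _),
    tsum_mul_left, tsum_mul_left, tsumDF, tsumDF]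
  have he : Real.exp (-l) * Real.exp l = 1 := by rw [← Real.exp_add]; simp
  linear_combination (l^2 + l) * he

lemma poisson_summable4 (l : ℝ) :
    Summable (fun n : ℕ => Real.exp (-l) * l ^ n / n.factorial * (n:ℝ)^4) := by
  apply Summable.congr ((((sumDF l 4).mul_left (Real.exp (-l))).add
    ((sumDF l 3).mul_left (6 * Real.exp (-l)))).add
    (((sumDF l 2).mul_left (7 * Real.exp (-l))).add
    ((sumDF l 1).mul_left (Real.exp (-l)))))
  intro n
  rw [pow4_eq n]; ring

lemma poisson_tsum4 (l : ℝ) :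
    ∑' n : ℕ, Real.exp (-l) * l ^ n / n.factorial * (n:ℝ)^4 = l + 7*l^2 + 6*l^3 + l^4 := by
  have h : ∀ n : ℕ, Real.exp (-l) * l ^ n / n.factorial * (n:ℝ)^4
      = (Real.exp (-l) * (l ^ n / n.factorial * (n.descFactorial 4 : ℝ))
        + 6 * Real.exp (-l) * (l ^ n / n.factorial * (n.descFactorial 3 : ℝ)))
        + (7 * Real.exp (-l) * (l ^ n / n.factorial * (n.descFactorial 2 : ℝ))
        + Real.exp (-l) * (l ^ n / n.factorial * (n.descFactorial 1 : ℝ))) := by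
    intro n; rw [pow4_eq n]; ring
  rw [tsum_congr h,
    Summable.tsum_add (((sumDF l 4).mul_left _).add ((sumDF l 3).mul_left _))
      (((sumDF l 2).mul_left _).add ((sumDF l 1).mul_left _)),
    Summable.tsum_add ((sumDF l 4).mul_left _) ((sumDF l 3).mul_left _),
    Summable.tsum_add ((sumDF l 2).mul_left _) ((sumDF l 1).mul_left _),
    tsum_mul_left, tsum_mul_left, tsum_mul_left, tsum_mul_left,
    tsumDF, tsumDF, tsumDF, tsumDF]
  have he : Real.exp (-l) * Real.exp l = 1 := by rw [← Real.exp_add]; simp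
  linear_combination (l^4 + 6*l^3 + 7*l^2 + l) * he

open scoped ENNReal

lemma poisson_lintegral {Ω : Type*} [MeasurableSpace Ω] (μ : Measure Ω)
    (X : Ω → ℕ) (hX : Measurable X) (l : ℝ) (hl : 0 ≤ l)
    (hlaw : ∀ n : ℕ, μ {ω | X ω = n}
      = ENNReal.ofReal (Real.exp (-l) * l ^ n / n.factorial)) (k : ℕ)
    (hs : Summable (fun n : ℕ => Real.exp (-l) * l ^ n / n.factorial * (n:ℝ)^k)) :
    ∫⁻ ω, ((X ω : ℝ≥0∞)) ^ k ∂μ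
      = ENNReal.ofReal (∑' n : ℕ, Real.exp (-l) * l ^ n / n.factorial * (n:ℝ)^k) := by
  have hg : Measurable (fun n : ℕ => ((n : ℝ≥0∞)) ^ k) := Measurable.of_discrete
  have hnn : ∀ n : ℕ, 0 ≤ Real.exp (-l) * l ^ n / n.factorial * (n:ℝ)^k := by
    intro n; positivity
  calc ∫⁻ ω, ((X ω : ℝ≥0∞)) ^ k ∂μ
      = ∫⁻ n : ℕ, ((n : ℝ≥0∞)) ^ k ∂(μ.map X) := (lintegral_map hg hX).symm
    _ = ∑' n : ℕ, ((n : ℝ≥0∞)) ^ k * (μ.map X) {n} := lintegral_countable' _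
    _ = ENNReal.ofReal (∑' n : ℕ, Real.exp (-l) * l ^ n / n.factorial * (n:ℝ)^k) := ?_
  rw [ENNReal.ofReal_tsum_of_nonneg hnn hs]
  refine tsum_congr fun n => ?_
  rw [Measure.map_apply hX (measurableSet_singleton n)]
  have hpre : X ⁻¹' {n} = {ω | X ω = n} := rfl
  rw [hpre, hlaw n, ← ENNReal.ofReal_natCast n, ← ENNReal.ofReal_pow (by positivity),
    ← ENNReal.ofReal_mul (by positivity), mul_comm]

/-- Let `q` be a pmf on a finite type `α`, `m > 0`, and let
`(M_x)_{x ∈ α}` be independent with `M_x ~ Poisson(m · q_x)`. Then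
`E[(Σ_x M_x²)²] ≤ m + 7m² + 6m³ · C(q) + m⁴ · C(q)²` where `C(q) = Σ_x q_x²`. -/
theorem poissonized_sum_sq_second_moment_bound
    {Ω : Type*} {mΩ : MeasurableSpace Ω} (μ : Measure Ω) [IsProbabilityMeasure μ]
    {α : Type*} [Fintype α]
    (q : α → ℝ) (hq0 : ∀ x, 0 ≤ q x) (hq1 : ∑ x, q x = 1)
    (m : ℝ) (hm : 0 < m)
    (M : α → Ω → ℕ) (hMmeas : ∀ x, Measurable (M x))
    (hindep : iIndepFun M μ)
    (hlaw : ∀ x (n : ℕ), μ {ω | M x ω = n}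
      = ENNReal.ofReal (Real.exp (-(m * q x)) * (m * q x) ^ n / n.factorial)) :
    ∫ ω, (∑ x, ((M x ω : ℝ)) ^ 2) ^ 2 ∂μ
      ≤ m + 7 * m ^ 2 + 6 * m ^ 3 * (∑ x, (q x) ^ 2)
        + m ^ 4 * (∑ x, (q x) ^ 2) ^ 2 := by
  classical
  have hl0 : ∀ x, 0 ≤ m * q x := fun x => mul_nonneg hm.le (hq0 x)
  set e2 : α → ℝ := fun x => m * q x + (m * q x)^2 with he2
  set e4 : α → ℝ := fun x => m * q x + 7*(m * q x)^2 + 6*(m * q x)^3 + (m * q x)^4 with he4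
  have he2nn : ∀ x, 0 ≤ e2 x := fun x => by have := hl0 x; positivity
  have he4nn : ∀ x, 0 ≤ e4 x := fun x => by have := hl0 x; positivity
  have hL2 : ∀ x, ∫⁻ ω, ((M x ω : ℝ≥0∞))^2 ∂μ = ENNReal.ofReal (e2 x) := fun x => by
    rw [poisson_lintegral μ (M x) (hMmeas x) (m * q x) (hl0 x) (hlaw x) 2
      (poisson_summable2 (m * q x)), poisson_tsum2]
  have hL4 : ∀ x, ∫⁻ ω, ((M x ω : ℝ≥0∞))^4 ∂μ = ENNReal.ofReal (e4 x) := fun x => by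
    rw [poisson_lintegral μ (M x) (hMmeas x) (m * q x) (hl0 x) (hlaw x) 4
      (poisson_summable4 (m * q x)), poisson_tsum4]
  have hMe : ∀ x, Measurable fun ω => ((M x ω : ℝ≥0∞))^2 :=
    fun x => (Measurable.of_discrete (f := fun n : ℕ => ((n:ℝ≥0∞))^2)).comp (hMmeas x)
  have hXY : ∀ x y, x ≠ y → ∫⁻ ω, ((M x ω : ℝ≥0∞))^2 * ((M y ω : ℝ≥0∞))^2 ∂μ
      = ENNReal.ofReal (e2 x * e2 y) := by
    intro x y hxy
    have hind := (hindep.indepFun hxy).comp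
        (Measurable.of_discrete (f := fun n : ℕ => ((n:ℝ≥0∞))^2))
        (Measurable.of_discrete (f := fun n : ℕ => ((n:ℝ≥0∞))^2))
    have h := lintegral_mul_eq_lintegral_mul_lintegral_of_indepFun (hMe x) (hMe y) hind
    simp only [Pi.mul_apply, Function.comp_apply, Function.comp] at h
    rw [h, hL2 x, hL2 y, ← ENNReal.ofReal_mul (he2nn x)]
  -- value of each double-sum entry
  have hentry : ∀ x y, ∫⁻ ω, ((M x ω : ℝ≥0∞))^2 * ((M y ω : ℝ≥0∞))^2 ∂μ
      = ENNReal.ofReal (if x = y then e4 x else e2 x * e2 y) := by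
    intro x y
    by_cases h : x = y
    · subst h
      rw [if_pos rfl, ← hL4 x]
      refine lintegral_congr fun ω => ?_
      ring
    · rw [if_neg h]; exact hXY x y h
  set T : ℝ := ∑ x, ∑ y, (if x = y then e4 x else e2 x * e2 y) with hT
  have hTnn : 0 ≤ T :=
    Finset.sum_nonneg fun x _ => Finset.sum_nonneg fun y _ => by
      by_cases h : x = y <;> simp [h, he4nn, mul_nonneg (he2nn x) (he2nn y)]
  -- main lintegral identity
  have key : ∫⁻ ω, ENNReal.ofReal ((∑ x, ((M x ω : ℝ)) ^ 2) ^ 2) ∂μ = ENNReal.ofReal T := by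
    have hof : ∀ ω, ENNReal.ofReal ((∑ x, ((M x ω : ℝ)) ^ 2) ^ 2)
        = ∑ x, ∑ y, ((M x ω : ℝ≥0∞))^2 * ((M y ω : ℝ≥0∞))^2 := by
      intro ω
      have h1 : (∑ x, ((M x ω : ℝ)) ^ 2) ^ 2 = (((∑ x, (M x ω)^2)^2 : ℕ) : ℝ) := by
        push_cast; ring
      rw [h1, ENNReal.ofReal_natCast]
      push_cast
      rw [sq, Finset.sum_mul_sum]
    rw [lintegral_congr hof, lintegral_finset_sum _ (f := fun x ω => ∑ y, ((M x ω : ℝ≥0∞))^2 * ((M y ω : ℝ≥0∞))^2) fun x _ =>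
      Finset.measurable_sum _ fun y _ => (hMe x).mul (hMe y)]
    have : ∀ x, ∫⁻ ω, (∑ y, ((M x ω : ℝ≥0∞))^2 * ((M y ω : ℝ≥0∞))^2) ∂μ
        = ENNReal.ofReal (∑ y, (if x = y then e4 x else e2 x * e2 y)) := by
      intro x
      rw [lintegral_finset_sum _ (f := fun y ω => ((M x ω : ℝ≥0∞))^2 * ((M y ω : ℝ≥0∞))^2) fun y _ => (hMe x).mul (hMe y)]
      rw [Finset.sum_congr rfl fun y _ => hentry x y]
      rw [← ENNReal.ofReal_sum_of_nonneg fun y _ => by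
        by_cases h : x = y <;> simp [h, he4nn, mul_nonneg (he2nn x) (he2nn y)]]
    rw [Finset.sum_congr rfl fun x _ => this x,
      ← ENNReal.ofReal_sum_of_nonneg fun x _ => Finset.sum_nonneg fun y _ => by
        by_cases h : x = y <;> simp [h, he4nn, mul_nonneg (he2nn x) (he2nn y)]]
  -- convert Bochner integral
  have hFmeas : Measurable fun ω => (∑ x, ((M x ω : ℝ)) ^ 2) ^ 2 := by
    have h1 : Measurable fun ω => ∑ x, ((M x ω : ℝ)) ^ 2 :=
      Finset.measurable_sum _ fun x _ =>
        (Measurable.of_discrete (f := fun n : ℕ => ((n:ℝ))^2)).comp (hMmeas x)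
    exact h1.pow_const 2
  have hInt : ∫ ω, (∑ x, ((M x ω : ℝ)) ^ 2) ^ 2 ∂μ = T := by
    rw [integral_eq_lintegral_of_nonneg_ae
      (Filter.Eventually.of_forall fun ω => by positivity) hFmeas.aestronglyMeasurable,
      key, ENNReal.toReal_ofReal hTnn]
  rw [hInt]
  -- real arithmetic
  have hq_le1 : ∀ x, q x ≤ 1 := fun x =>
    hq1 ▸ Finset.single_le_sum (fun i _ => hq0 i) (Finset.mem_univ x)
  set C : ℝ := ∑ x, (q x)^2 with hC
  have hC0 : 0 ≤ C := Finset.sum_nonneg fun x _ => sq_nonneg _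
  have hC1 : C ≤ 1 := by
    rw [← hq1, hC]
    exact Finset.sum_le_sum fun x _ => by nlinarith [hq0 x, hq_le1 x]
  set D : ℝ := ∑ x, (q x)^3 with hD
  have hD0 : 0 ≤ D := Finset.sum_nonneg fun x _ => pow_nonneg (hq0 x) 3
  have hDC : D ≤ C := Finset.sum_le_sum fun x _ => by nlinarith [hq0 x, hq_le1 x]
  have hsum1 : ∑ x, m * q x = m := by rw [← Finset.mul_sum, hq1, mul_one]
  have hsum2 : ∑ x, (m * q x)^2 = m^2 * C := by
    simp only [mul_pow, hC]; rw [← Finset.mul_sum]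
  have hsum3 : ∑ x, (m * q x)^3 = m^3 * D := by
    simp only [mul_pow, hD]; rw [← Finset.mul_sum]
  have he2sum : ∑ x, e2 x = m + m^2 * C := by
    rw [he2, Finset.sum_add_distrib, hsum1, hsum2]
  have hrow : ∀ x, ∑ y, (if x = y then e4 x else e2 x * e2 y)
      = e2 x * (∑ y, e2 y) + (e4 x - e2 x * e2 x) := by
    intro x
    have h : ∀ y, (if x = y then e4 x else e2 x * e2 y)
        = e2 x * e2 y + (if x = y then e4 x - e2 x * e2 x else 0) := by
      intro y
      by_cases h : x = y
      · subst h; simp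
      · simp [h]
    rw [Finset.sum_congr rfl fun y _ => h y, Finset.sum_add_distrib, Finset.sum_ite_eq,
      if_pos (Finset.mem_univ x), ← Finset.mul_sum]
  have hTval : T = (m + m^2*C) * (m + m^2*C) + (m + 6*(m^2*C) + 4*(m^3*D)) := by
    rw [hT, Finset.sum_congr rfl fun x _ => hrow x, Finset.sum_add_distrib,
      ← Finset.sum_mul, he2sum]
    congr 1
    have h : ∀ x, e4 x - e2 x * e2 x = m * q x + 6*(m * q x)^2 + 4*(m * q x)^3 := by
      intro x; rw [he2, he4]; ring
    rw [Finset.sum_congr rfl fun x _ => h x, Finset.sum_add_distrib, Finset.sum_add_distrib,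
      hsum1]
    rw [show ∀ s : Finset α, ∑ x ∈ s, 6*(m * q x)^2 = 6 * ∑ x ∈ s, (m*q x)^2 from
      fun s => by rw [Finset.mul_sum], hsum2]
    rw [show ∀ s : Finset α, ∑ x ∈ s, 4*(m * q x)^3 = 4 * ∑ x ∈ s, (m*q x)^3 from
      fun s => by rw [Finset.mul_sum], hsum3]
  rw [hTval]
  nlinarith [mul_pos hm hm, mul_pos (mul_pos hm hm) hm, sq_nonneg (C - D), hm.le,
    mul_nonneg (mul_nonneg hm.le hm.le) hm.le]
end

section
/- Let q be a probability mass function on a finite type α, let m > 0, let (M_x)_{x ∈ α} be independent random variables with M_x distributed as Poisson(m · q_x), and let (h_x)_{x ∈ α} be independent random variables uniform on {−1, +1}, independent of (M_x). Let V = Σ_x h_x · M_x. Then Var[V²] ≤ 3m + 20m² + 16m³ · C(q) + 2m⁴ · C(q)², where C(q) = Σ_x q_x². -/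
open MeasureTheory ProbabilityTheory

lemma hasSum_exp_real (lam : ℝ) :
    HasSum (fun n : ℕ => lam ^ n / n.factorial) (Real.exp lam) := by
  rw [Real.exp_eq_exp_ℝ]
  exact NormedSpace.expSeries_div_hasSum_exp lam

lemma hasSum_desc (lam : ℝ) (k : ℕ) :
    HasSum (fun n : ℕ => (n.descFactorial k : ℝ) * (lam ^ n / n.factorial))
      (lam ^ k * Real.exp lam) := by
  have hshift : ∀ n : ℕ, (((n + k).descFactorial k : ℝ)) * (lam ^ (n + k) / (n + k).factorial)
      = lam ^ k * (lam ^ n / n.factorial) := by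
    intro n
    have hd : (n.factorial : ℝ) * ((n + k).descFactorial k : ℝ) = ((n + k).factorial : ℝ) := by
      have h := Nat.factorial_mul_descFactorial (Nat.le_add_left k n)
      rw [Nat.add_sub_cancel] at h
      exact_mod_cast h
    have h1 : (n.factorial : ℝ) ≠ 0 := Nat.cast_ne_zero.mpr n.factorial_ne_zero
    have h2 : ((n + k).factorial : ℝ) ≠ 0 := Nat.cast_ne_zero.mpr (n + k).factorial_ne_zero
    field_simp
    rw [← hd, pow_add]
    ring
  have key : HasSum (fun n : ℕ =>
      (((n + k).descFactorial k : ℝ)) * (lam ^ (n + k) / (n + k).factorial))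
      (lam ^ k * Real.exp lam) := by
    have := (hasSum_exp_real lam).mul_left (lam ^ k)
    simpa [hshift] using this
  refine (hasSum_nat_add_iff' k).mp ?_
  have hzero : ∑ i ∈ Finset.range k, (i.descFactorial k : ℝ) * (lam ^ i / i.factorial) = 0 :=
    Finset.sum_eq_zero fun i hi => by
      simp [Nat.descFactorial_eq_zero_iff_lt.mpr (Finset.mem_range.mp hi)]
  rw [hzero, sub_zero]
  exact key

lemma cast_df2 (n : ℕ) : (n.descFactorial 2 : ℝ) = (n : ℝ) ^ 2 - n := by
  cases n with
  | zero => simp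
  | succ k => simp [Nat.descFactorial]; push_cast; ring

lemma cast_df3 (n : ℕ) : (n.descFactorial 3 : ℝ) = (n : ℝ) ^ 3 - 3 * (n : ℝ) ^ 2 + 2 * n := by
  match n with
  | 0 => simp
  | 1 => simp [Nat.descFactorial]; norm_num
  | (k + 2) => simp [Nat.descFactorial]; push_cast; ring

lemma cast_df4 (n : ℕ) :
    (n.descFactorial 4 : ℝ) = (n : ℝ) ^ 4 - 6 * (n : ℝ) ^ 3 + 11 * (n : ℝ) ^ 2 - 6 * n := by
  match n with
  | 0 => simp
  | 1 => simp [Nat.descFactorial]; norm_num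
  | 2 => simp [Nat.descFactorial]; norm_num
  | (k + 3) => simp [Nat.descFactorial]; push_cast; ring

lemma hasSum_pois_pow1 (lam : ℝ) :
    HasSum (fun n : ℕ => (n : ℝ) * (lam ^ n / n.factorial)) (lam * Real.exp lam) := by
  have := hasSum_desc lam 1
  simpa using this

lemma hasSum_pois_pow2 (lam : ℝ) :
    HasSum (fun n : ℕ => (n : ℝ) ^ 2 * (lam ^ n / n.factorial))
      ((lam ^ 2 + lam) * Real.exp lam) := by
  have h := (hasSum_desc lam 2).add (hasSum_desc lam 1)
  convert h using 1
  · funext n; rw [cast_df2]; simp; ring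
  · ring

lemma hasSum_pois_pow4 (lam : ℝ) :
    HasSum (fun n : ℕ => (n : ℝ) ^ 4 * (lam ^ n / n.factorial))
      ((lam ^ 4 + 6 * lam ^ 3 + 7 * lam ^ 2 + lam) * Real.exp lam) := by
  have h := ((hasSum_desc lam 4).add ((hasSum_desc lam 3).mul_left 6)).add
    (((hasSum_desc lam 2).mul_left 7).add (hasSum_desc lam 1))
  convert h using 1
  · funext n; rw [cast_df4, cast_df3, cast_df2]; simp; ring
  · ring

lemma poisson_integral {Ω : Type*} {mΩ : MeasurableSpace Ω} (μ : Measure Ω)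
    [IsProbabilityMeasure μ] (lam : ℝ) (hlam : 0 ≤ lam)
    (N : Ω → ℕ) (hN : Measurable N)
    (hlaw : ∀ n, μ {ω | N ω = n}
      = ENNReal.ofReal (Real.exp (-lam) * lam ^ n / n.factorial))
    (g : ℕ → ℝ) (hg : ∀ n, 0 ≤ g n) (S : ℝ)
    (hsum : HasSum (fun n => Real.exp (-lam) * lam ^ n / n.factorial * g n) S) :
    Integrable (fun ω => g (N ω)) μ ∧ ∫ ω, g (N ω) ∂μ = S := by
  have hp : ∀ n : ℕ, 0 ≤ Real.exp (-lam) * lam ^ n / n.factorial := fun n => by positivity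
  set ν : Measure ℕ := μ.map N with hν_def
  have hν : ∀ n : ℕ, ν {n} = ENNReal.ofReal (Real.exp (-lam) * lam ^ n / n.factorial) := by
    intro n
    rw [hν_def, Measure.map_apply hN (measurableSet_singleton n)]
    convert hlaw n using 2
    rfl
  have hgmeas : Measurable g := measurable_of_countable g
  have hint : Integrable g ν := by
    refine ⟨hgmeas.aestronglyMeasurable, ?_⟩
    rw [HasFiniteIntegral]
    calc ∫⁻ n, ‖g n‖₊ ∂ν = ∑' n : ℕ, ‖g n‖₊ * ν {n} := lintegral_countable' _
      _ = ∑' n : ℕ, ENNReal.ofReal (Real.exp (-lam) * lam ^ n / n.factorial * g n) := by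
          congr 1; funext n
          rw [hν n, ← enorm_eq_nnnorm, Real.enorm_eq_ofReal (hg n), ← ENNReal.ofReal_mul (hg n)]
          ring_nf
      _ = ENNReal.ofReal S := by
          rw [← hsum.tsum_eq]
          exact (ENNReal.ofReal_tsum_of_nonneg
            (fun n => mul_nonneg (hp n) (hg n)) hsum.summable).symm
      _ < ⊤ := ENNReal.ofReal_lt_top
  have hint' : Integrable (fun ω => g (N ω)) μ :=
    (integrable_map_measure hgmeas.aestronglyMeasurable hN.aemeasurable).mp hint
  refine ⟨hint', ?_⟩
  calc ∫ ω, g (N ω) ∂μ = ∫ n, g n ∂ν :=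
        (integral_map hN.aemeasurable hgmeas.aestronglyMeasurable).symm
    _ = ∑' n : ℕ, (ν {n}).toReal • g n := integral_countable' hint
    _ = S := by
        rw [← hsum.tsum_eq]
        congr 1; funext n
        rw [hν n, ENNReal.toReal_ofReal (hp n), smul_eq_mul]

/-- Let `q` be a pmf on a finite type `α`, `m > 0`, let `(M_x)` be
independent with `M_x ~ Poisson(m · q_x)`, and `(h_x)` independent uniform on `{-1, +1}`,
with the whole family `(M_x, h_x)_{x}` mutually independent. For `V = Σ_x h_x · M_x`,
`Var[V²] ≤ 3m + 20m² + 16m³ · C(q) + 2m⁴ · C(q)²` where `C(q) = Σ_x q_x²`. -/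
theorem hashed_poissonized_sketch_variance_bound
    {Ω : Type*} {mΩ : MeasurableSpace Ω} (μ : Measure Ω) [IsProbabilityMeasure μ]
    {α : Type*} [Fintype α]
    (q : α → ℝ) (hq0 : ∀ x, 0 ≤ q x) (hq1 : ∑ x, q x = 1)
    (m : ℝ) (hm : 0 < m)
    (M : α → Ω → ℕ) (h : α → Ω → ℝ)
    (hMmeas : ∀ x, Measurable (M x)) (hhmeas : ∀ x, Measurable (h x))
    (hval : ∀ x ω, h x ω = 1 ∨ h x ω = -1)
    (hunif : ∀ x, μ {ω | h x ω = 1} = 1 / 2)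
    (hMlaw : ∀ x (n : ℕ), μ {ω | M x ω = n}
      = ENNReal.ofReal (Real.exp (-(m * q x)) * (m * q x) ^ n / n.factorial))
    (hindep : iIndepFun
      (Sum.elim (fun x ω => ((M x ω : ℝ))) h) μ) :
    variance (fun ω => (∑ x, h x ω * (M x ω : ℝ)) ^ 2) μ
      ≤ 3 * m + 20 * m ^ 2 + 16 * m ^ 3 * (∑ x, (q x) ^ 2)
        + 2 * m ^ 4 * (∑ x, (q x) ^ 2) ^ 2 := by
  classical
  set F : α ⊕ α → Ω → ℝ := Sum.elim (fun x ω => ((M x ω : ℝ))) h with hF_def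
  have hFmeas : ∀ j, Measurable (F j) := by
    rintro (x | x)
    · exact (measurable_of_countable _).comp (hMmeas x)
    · exact hhmeas x
  set W : α → Ω → ℝ := fun x ω => h x ω * (M x ω : ℝ) with hW_def
  have hWmeas : ∀ x, Measurable (W x) :=
    fun x => (hhmeas x).mul ((measurable_of_countable _).comp (hMmeas x))
  -- expectation of the signs
  have hEh : ∀ x, ∫ ω, h x ω ∂μ = 0 := by
    intro x
    have hs : MeasurableSet {ω | h x ω = 1} := hhmeas x (measurableSet_singleton 1)
    have heq : (fun ω => h x ω)
        = fun ω => Set.indicator {ω | h x ω = 1} (fun _ => (2 : ℝ)) ω - 1 := by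
      funext ω
      rcases hval x ω with e | e
      · rw [Set.indicator_of_mem (by simpa using e)]; rw [e]; norm_num
      · rw [Set.indicator_of_notMem (by rw [Set.mem_setOf_eq, e]; norm_num)]; rw [e]; norm_num
    rw [heq, integral_sub ((integrable_const (2 : ℝ)).indicator hs) (integrable_const 1)]
    rw [integral_indicator_const _ hs, integral_const]
    rw [measureReal_def, hunif x]
    simp
  -- Poisson moments
  have mom : ∀ (x : α) (k : ℕ) (Pk : ℝ),
      HasSum (fun n : ℕ => (n : ℝ) ^ k * ((m * q x) ^ n / n.factorial))
        (Pk * Real.exp (m * q x)) →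
      Integrable (fun ω => ((M x ω : ℝ)) ^ k) μ ∧ ∫ ω, ((M x ω : ℝ)) ^ k ∂μ = Pk := by
    intro x k Pk hS
    have hlam : 0 ≤ m * q x := mul_nonneg hm.le (hq0 x)
    have h2 : HasSum
        (fun n : ℕ => Real.exp (-(m * q x)) * (m * q x) ^ n / n.factorial * (n : ℝ) ^ k) Pk := by
      have h3 := hS.mul_left (Real.exp (-(m * q x)))
      have h4 : Real.exp (-(m * q x)) * (Pk * Real.exp (m * q x)) = Pk := by
        rw [show Real.exp (-(m * q x)) * (Pk * Real.exp (m * q x))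
            = Pk * (Real.exp (-(m * q x)) * Real.exp (m * q x)) from by ring,
          ← Real.exp_add]
        simp
      rw [h4] at h3
      convert h3 using 1
      · rfl
      funext n; ring
    exact poisson_integral μ (m * q x) hlam (M x) (hMmeas x) (hMlaw x)
      (fun n => (n : ℝ) ^ k) (fun n => by positivity) Pk h2
  have hM1 := fun x => mom x 1 (m * q x) (by simpa using hasSum_pois_pow1 (m * q x))
  have hM2 := fun x => mom x 2 ((m * q x) ^ 2 + (m * q x)) (hasSum_pois_pow2 (m * q x))
  have hM4 := fun x => mom x 4
    ((m * q x) ^ 4 + 6 * (m * q x) ^ 3 + 7 * (m * q x) ^ 2 + (m * q x))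
    (hasSum_pois_pow4 (m * q x))
  set e2 : α → ℝ := fun x => (m * q x) ^ 2 + (m * q x) with he2_def
  set e4 : α → ℝ := fun x =>
    (m * q x) ^ 4 + 6 * (m * q x) ^ 3 + 7 * (m * q x) ^ 2 + (m * q x) with he4_def
  -- pairwise factorization
  have pair : ∀ (i j : α ⊕ α), i ≠ j → ∀ (gi gj : ℝ → ℝ), Measurable gi → Measurable gj →
      ∫ ω, gi (F i ω) * gj (F j ω) ∂μ
        = (∫ ω, gi (F i ω) ∂μ) * ∫ ω, gj (F j ω) ∂μ := by
    intro i j hij gi gj hgi hgj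
    exact ((hindep.indepFun hij).comp hgi hgj).integral_fun_mul_eq_mul_integral
      (hgi.comp (hFmeas i)).aestronglyMeasurable (hgj.comp (hFmeas j)).aestronglyMeasurable
  -- extraction of one independent sign from a product of seven factors
  have extractH : ∀ (v : α) (j1 j2 j3 j4 j5 j6 j7 : α ⊕ α) (g1 g2 g3 g4 g5 g6 g7 : ℝ → ℝ),
      Measurable g1 → Measurable g2 → Measurable g3 → Measurable g4 → Measurable g5 →
      Measurable g6 → Measurable g7 →
      Sum.inr v ≠ j1 → Sum.inr v ≠ j2 → Sum.inr v ≠ j3 → Sum.inr v ≠ j4 →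
      Sum.inr v ≠ j5 → Sum.inr v ≠ j6 → Sum.inr v ≠ j7 →
      ∫ ω, h v ω * (g1 (F j1 ω) * g2 (F j2 ω) * g3 (F j3 ω) * g4 (F j4 ω) * g5 (F j5 ω)
        * g6 (F j6 ω) * g7 (F j7 ω)) ∂μ = 0 := by
    intro v j1 j2 j3 j4 j5 j6 j7 g1 g2 g3 g4 g5 g6 g7 hg1 hg2 hg3 hg4 hg5 hg6 hg7
      hn1 hn2 hn3 hn4 hn5 hn6 hn7
    have hmem1 : j1 ∈ ({j1, j2, j3, j4, j5, j6, j7} : Finset (α ⊕ α)) := by simp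
    have hmem2 : j2 ∈ ({j1, j2, j3, j4, j5, j6, j7} : Finset (α ⊕ α)) := by simp
    have hmem3 : j3 ∈ ({j1, j2, j3, j4, j5, j6, j7} : Finset (α ⊕ α)) := by simp
    have hmem4 : j4 ∈ ({j1, j2, j3, j4, j5, j6, j7} : Finset (α ⊕ α)) := by simp
    have hmem5 : j5 ∈ ({j1, j2, j3, j4, j5, j6, j7} : Finset (α ⊕ α)) := by simp
    have hmem6 : j6 ∈ ({j1, j2, j3, j4, j5, j6, j7} : Finset (α ⊕ α)) := by simp
    have hmem7 : j7 ∈ ({j1, j2, j3, j4, j5, j6, j7} : Finset (α ⊕ α)) := by simp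
    have hvs : Sum.inr v ∉ ({j1, j2, j3, j4, j5, j6, j7} : Finset (α ⊕ α)) := by
      simp [hn1, hn2, hn3, hn4, hn5, hn6, hn7]
    have hd : Disjoint ({Sum.inr v} : Finset (α ⊕ α)) {j1, j2, j3, j4, j5, j6, j7} :=
      Finset.disjoint_singleton_left.mpr hvs
    have base := hindep.indepFun_finset {Sum.inr v} {j1, j2, j3, j4, j5, j6, j7} hd hFmeas
    have hφ : Measurable (fun t : (({Sum.inr v} : Finset (α ⊕ α)) : Type _) → ℝ =>
        t ⟨Sum.inr v, Finset.mem_singleton_self _⟩) := measurable_pi_apply _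
    have hψ : Measurable (fun t : ((({j1, j2, j3, j4, j5, j6, j7} : Finset (α ⊕ α))) : Type _) → ℝ =>
        g1 (t ⟨j1, hmem1⟩) * g2 (t ⟨j2, hmem2⟩) * g3 (t ⟨j3, hmem3⟩) * g4 (t ⟨j4, hmem4⟩)
          * g5 (t ⟨j5, hmem5⟩) * g6 (t ⟨j6, hmem6⟩) * g7 (t ⟨j7, hmem7⟩)) := by
      refine (((((((hg1.comp (measurable_pi_apply _)).mul
        (hg2.comp (measurable_pi_apply _))).mul
        (hg3.comp (measurable_pi_apply _))).mul
        (hg4.comp (measurable_pi_apply _))).mul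
        (hg5.comp (measurable_pi_apply _))).mul
        (hg6.comp (measurable_pi_apply _))).mul
        (hg7.comp (measurable_pi_apply _)))
    have hi := base.comp hφ hψ
    have hmeasP : AEStronglyMeasurable (fun ω => g1 (F j1 ω) * g2 (F j2 ω) * g3 (F j3 ω)
        * g4 (F j4 ω) * g5 (F j5 ω) * g6 (F j6 ω) * g7 (F j7 ω)) μ :=
      ((((((((hg1.comp (hFmeas j1)).mul (hg2.comp (hFmeas j2))).mul
        (hg3.comp (hFmeas j3))).mul (hg4.comp (hFmeas j4))).mul
        (hg5.comp (hFmeas j5))).mul (hg6.comp (hFmeas j6))).mul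
        (hg7.comp (hFmeas j7)))).aestronglyMeasurable
    have key : ∫ ω, h v ω * (g1 (F j1 ω) * g2 (F j2 ω) * g3 (F j3 ω) * g4 (F j4 ω)
        * g5 (F j5 ω) * g6 (F j6 ω) * g7 (F j7 ω)) ∂μ
        = (∫ ω, h v ω ∂μ) * ∫ ω, g1 (F j1 ω) * g2 (F j2 ω) * g3 (F j3 ω) * g4 (F j4 ω)
          * g5 (F j5 ω) * g6 (F j6 ω) * g7 (F j7 ω) ∂μ :=
      hi.integral_fun_mul_eq_mul_integral (hhmeas v).aestronglyMeasurable hmeasP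
    rw [key, hEh v, zero_mul]
  -- integrability of products of four W's
  have habsh : ∀ (x : α) (ω : Ω), |h x ω| = 1 := by
    intro x ω; rcases hval x ω with e | e <;> simp [e]
  have hInt4 : ∀ x y z w : α,
      Integrable (fun ω => (W x ω * W y ω) * (W z ω * W w ω)) μ := by
    intro x y z w
    have hbound : Integrable (fun ω => ((M x ω : ℝ)) ^ 4 + ((M y ω : ℝ)) ^ 4
        + ((M z ω : ℝ)) ^ 4 + ((M w ω : ℝ)) ^ 4) μ :=
      (((hM4 x).1.add (hM4 y).1).add (hM4 z).1).add (hM4 w).1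
    refine Integrable.mono' hbound
      ((((hWmeas x).mul (hWmeas y)).mul ((hWmeas z).mul (hWmeas w))).aestronglyMeasurable)
      (Filter.Eventually.of_forall fun ω => ?_)
    simp only [hW_def, Real.norm_eq_abs, abs_mul, habsh, one_mul, Nat.abs_cast]
    have ha : (0 : ℝ) ≤ (M x ω : ℝ) := Nat.cast_nonneg _
    have hb : (0 : ℝ) ≤ (M y ω : ℝ) := Nat.cast_nonneg _
    have hc : (0 : ℝ) ≤ (M z ω : ℝ) := Nat.cast_nonneg _
    have hd : (0 : ℝ) ≤ (M w ω : ℝ) := Nat.cast_nonneg _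
    nlinarith [sq_nonneg ((M x ω : ℝ) ^ 2 - (M y ω : ℝ) ^ 2),
      sq_nonneg ((M z ω : ℝ) ^ 2 - (M w ω : ℝ) ^ 2),
      sq_nonneg ((M x ω : ℝ) * (M y ω : ℝ) - (M z ω : ℝ) * (M w ω : ℝ)),
      mul_nonneg (mul_nonneg ha hb) (mul_nonneg hc hd)]
  have hInt2 : ∀ x y : α, Integrable (fun ω => W x ω * W y ω) μ := by
    intro x y
    have hbound : Integrable (fun ω => ((M x ω : ℝ)) ^ 2 + ((M y ω : ℝ)) ^ 2) μ :=
      (hM2 x).1.add (hM2 y).1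
    refine Integrable.mono' hbound
      (((hWmeas x).mul (hWmeas y)).aestronglyMeasurable)
      (Filter.Eventually.of_forall fun ω => ?_)
    simp only [hW_def, Real.norm_eq_abs, abs_mul, habsh, one_mul, Nat.abs_cast]
    have ha : (0 : ℝ) ≤ (M x ω : ℝ) := Nat.cast_nonneg _
    have hb : (0 : ℝ) ≤ (M y ω : ℝ) := Nat.cast_nonneg _
    nlinarith [sq_nonneg ((M x ω : ℝ) - (M y ω : ℝ))]
  have hV4pt : ∀ ω : Ω, (∑ x, h x ω * (M x ω : ℝ)) ^ 4
      = ∑ x, ∑ y, ∑ z, ∑ w, (W x ω * W y ω) * (W z ω * W w ω) := by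
    intro ω
    rw [show (∑ x, h x ω * (M x ω : ℝ)) ^ 4
        = ((∑ x, W x ω) * (∑ x, W x ω)) * ((∑ x, W x ω) * (∑ x, W x ω)) from by
      rw [hW_def]; ring]
    rw [Finset.sum_mul_sum, Finset.sum_mul_sum]
    refine Finset.sum_congr rfl fun x _ => ?_
    rw [show (∑ z, (∑ y, W x ω * W y ω) * ∑ w, W z ω * W w ω)
        = ∑ z, ∑ y, ∑ w : α, (W x ω * W y ω) * (W z ω * W w ω) from
      Finset.sum_congr rfl fun z _ => Finset.sum_mul_sum _ _ _ _]
    exact Finset.sum_comm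
  -- expectations of W and products
  have hEW : ∀ x, ∫ ω, W x ω ∂μ = 0 := by
    intro x
    have hp : ∫ ω, W x ω ∂μ = (∫ ω, h x ω ∂μ) * ∫ ω, ((M x ω : ℝ)) ∂μ :=
      pair (Sum.inr x) (Sum.inl x) (by simp) id id measurable_id measurable_id
    rw [hp, hEh x, zero_mul]
  have hTW : ∀ x y, x ≠ y → ∫ ω, W x ω * W y ω ∂μ = 0 := by
    intro x y hxy
    have base := hindep.indepFun_prodMk_prodMk hFmeas
      (Sum.inr x) (Sum.inl x) (Sum.inr y) (Sum.inl y)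
      (by simp [hxy]) (by simp) (by simp) (by simp [hxy])
    have hmul : Measurable (fun p : ℝ × ℝ => p.1 * p.2) := measurable_fst.mul measurable_snd
    have hi : IndepFun (W x) (W y) μ := base.comp hmul hmul
    rw [hi.integral_fun_mul_eq_mul_integral (hWmeas x).aestronglyMeasurable (hWmeas y).aestronglyMeasurable,
      hEW x, zero_mul]
  have hT2 : ∀ x, ∫ ω, W x ω * W x ω ∂μ = e2 x := by
    intro x
    have hpt : (fun ω => W x ω * W x ω) = fun ω => ((M x ω : ℝ)) ^ 2 :=
      funext fun ω => by rcases hval x ω with e | e <;> simp only [hW_def, e] <;> ring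
    rw [hpt]
    exact (hM2 x).2
  -- second moment of V
  have EV2 : ∫ ω, (∑ x, h x ω * (M x ω : ℝ)) ^ 2 ∂μ = ∑ x, e2 x := by
    have hpt2 : ∀ ω : Ω, (∑ x, h x ω * (M x ω : ℝ)) ^ 2 = ∑ x, ∑ y, W x ω * W y ω := by
      intro ω
      rw [show (∑ x, h x ω * (M x ω : ℝ)) ^ 2 = (∑ x, W x ω) * (∑ x, W x ω) from by
        rw [hW_def]; ring, Finset.sum_mul_sum]
    calc ∫ ω, (∑ x, h x ω * (M x ω : ℝ)) ^ 2 ∂μ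
        = ∫ ω, ∑ x, ∑ y, W x ω * W y ω ∂μ :=
          integral_congr_ae (Filter.Eventually.of_forall fun ω => hpt2 ω)
      _ = ∑ x, ∑ y, ∫ ω, W x ω * W y ω ∂μ := by
          rw [integral_finset_sum _ fun x _ => integrable_finset_sum _ fun y _ => hInt2 x y]
          exact Finset.sum_congr rfl fun x _ => integral_finset_sum _ fun y _ => hInt2 x y
      _ = ∑ x, e2 x := by
          refine Finset.sum_congr rfl fun x _ => ?_
          rw [Finset.sum_eq_single x (fun y _ hyx => hTW x y (Ne.symm hyx)) (by simp)]
          exact hT2 x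
  -- the value of each fourth-moment term
  have hT4 : ∀ x y z w : α, ∫ ω, (W x ω * W y ω) * (W z ω * W w ω) ∂μ =
      (if z = w ∧ y = z ∧ x = y then e4 x else 0)
    + (if z = w ∧ x = y ∧ x ≠ z then e2 x * e2 z else 0)
    + (if y = w ∧ x = z ∧ x ≠ y then e2 x * e2 y else 0)
    + (if x = w ∧ y = z ∧ x ≠ y then e2 x * e2 y else 0) := by
    intro x y z w
    by_cases hxy : x = y
    · subst hxy
      by_cases hzw : z = w
      · subst hzw
        by_cases hxz : x = z
        · subst hxz
          have hpt : (fun ω => (W x ω * W x ω) * (W x ω * W x ω))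
              = fun ω => ((M x ω : ℝ)) ^ 4 :=
            funext fun ω => by rcases hval x ω with e | e <;> simp only [hW_def, e] <;> ring
          rw [hpt, (hM4 x).2]
          simp [he4_def]
        · -- x = y, z = w, x ≠ z : pair term
          have hstep : ∫ ω, (W x ω * W x ω) * (W z ω * W z ω) ∂μ = e2 x * e2 z := by
            calc ∫ ω, (W x ω * W x ω) * (W z ω * W z ω) ∂μ
                = ∫ ω, ((M x ω : ℝ)) ^ 2 * ((M z ω : ℝ)) ^ 2 ∂μ :=
                  integral_congr_ae (Filter.Eventually.of_forall fun ω => by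
                    rcases hval x ω with e | e <;> rcases hval z ω with f | f <;>
                      simp only [hW_def, e, f] <;> ring)
              _ = (∫ ω, ((M x ω : ℝ)) ^ 2 ∂μ) * ∫ ω, ((M z ω : ℝ)) ^ 2 ∂μ :=
                  pair (Sum.inl x) (Sum.inl z) (by simp [hxz]) (fun t => t ^ 2) (fun t => t ^ 2)
                    (measurable_id.pow_const 2) (measurable_id.pow_const 2)
              _ = e2 x * e2 z := by rw [(hM2 x).2, (hM2 z).2]
          rw [hstep]
          simp [hxz]
      · -- x = y, z ≠ w : zero term
        have hstep : ∫ ω, (W x ω * W x ω) * (W z ω * W w ω) ∂μ = 0 := by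
          calc ∫ ω, (W x ω * W x ω) * (W z ω * W w ω) ∂μ
              = ∫ ω, h z ω * (((M x ω : ℝ)) ^ 2 * ((M z ω : ℝ)) * ((M w ω : ℝ)) * h w ω
                  * 1 * 1 * 1) ∂μ :=
                integral_congr_ae (Filter.Eventually.of_forall fun ω => by
                  rcases hval x ω with e | e <;> simp only [hW_def, e] <;> ring)
            _ = 0 := extractH z (Sum.inl x) (Sum.inl z) (Sum.inl w) (Sum.inr w) (Sum.inl x)
                (Sum.inl x) (Sum.inl x) (fun t => t ^ 2) id id id (fun _ => 1) (fun _ => 1)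
                (fun _ => 1) (measurable_id.pow_const 2) measurable_id measurable_id
                measurable_id measurable_const measurable_const measurable_const
                (by simp) (by simp) (by simp) (by simp [hzw]) (by simp) (by simp) (by simp)
        rw [hstep]
        simp [hzw]
    · by_cases hxz : x = z
      · subst hxz
        by_cases hyw : y = w
        · subst hyw
          have hstep : ∫ ω, (W x ω * W y ω) * (W x ω * W y ω) ∂μ = e2 x * e2 y := by
            calc ∫ ω, (W x ω * W y ω) * (W x ω * W y ω) ∂μ
                = ∫ ω, ((M x ω : ℝ)) ^ 2 * ((M y ω : ℝ)) ^ 2 ∂μ :=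
                  integral_congr_ae (Filter.Eventually.of_forall fun ω => by
                    rcases hval x ω with e | e <;> rcases hval y ω with f | f <;>
                      simp only [hW_def, e, f] <;> ring)
              _ = (∫ ω, ((M x ω : ℝ)) ^ 2 ∂μ) * ∫ ω, ((M y ω : ℝ)) ^ 2 ∂μ :=
                  pair (Sum.inl x) (Sum.inl y) (by simp [hxy]) (fun t => t ^ 2) (fun t => t ^ 2)
                    (measurable_id.pow_const 2) (measurable_id.pow_const 2)
              _ = e2 x * e2 y := by rw [(hM2 x).2, (hM2 y).2]
          rw [hstep]
          simp [hxy]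
        · -- x = z, y ≠ w, x ≠ y : zero
          have hstep : ∫ ω, (W x ω * W y ω) * (W x ω * W w ω) ∂μ = 0 := by
            calc ∫ ω, (W x ω * W y ω) * (W x ω * W w ω) ∂μ
                = ∫ ω, h y ω * (((M x ω : ℝ)) ^ 2 * ((M y ω : ℝ)) * ((M w ω : ℝ)) * h w ω
                    * 1 * 1 * 1) ∂μ :=
                  integral_congr_ae (Filter.Eventually.of_forall fun ω => by
                    rcases hval x ω with e | e <;> simp only [hW_def, e] <;> ring)
              _ = 0 := extractH y (Sum.inl x) (Sum.inl y) (Sum.inl w) (Sum.inr w) (Sum.inl x)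
                  (Sum.inl x) (Sum.inl x) (fun t => t ^ 2) id id id (fun _ => 1) (fun _ => 1)
                  (fun _ => 1) (measurable_id.pow_const 2) measurable_id measurable_id
                  measurable_id measurable_const measurable_const measurable_const
                  (by simp) (by simp) (by simp) (by simp [hyw]) (by simp) (by simp) (by simp)
          rw [hstep]
          simp [hxy, hyw, Ne.symm hxy]
      · by_cases hxw : x = w
        · subst hxw
          by_cases hyz : y = z
          · subst hyz
            have hstep : ∫ ω, (W x ω * W y ω) * (W y ω * W x ω) ∂μ = e2 x * e2 y := by
              calc ∫ ω, (W x ω * W y ω) * (W y ω * W x ω) ∂μ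
                  = ∫ ω, ((M x ω : ℝ)) ^ 2 * ((M y ω : ℝ)) ^ 2 ∂μ :=
                    integral_congr_ae (Filter.Eventually.of_forall fun ω => by
                      rcases hval x ω with e | e <;> rcases hval y ω with f | f <;>
                        simp only [hW_def, e, f] <;> ring)
                _ = (∫ ω, ((M x ω : ℝ)) ^ 2 ∂μ) * ∫ ω, ((M y ω : ℝ)) ^ 2 ∂μ :=
                    pair (Sum.inl x) (Sum.inl y) (by simp [hxy]) (fun t => t ^ 2) (fun t => t ^ 2)
                      (measurable_id.pow_const 2) (measurable_id.pow_const 2)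
                _ = e2 x * e2 y := by rw [(hM2 x).2, (hM2 y).2]
            rw [hstep]
            simp [hxy, Ne.symm hxy]
          · -- x = w, x ≠ y, x ≠ z, y ≠ z : zero
            have hstep : ∫ ω, (W x ω * W y ω) * (W z ω * W x ω) ∂μ = 0 := by
              calc ∫ ω, (W x ω * W y ω) * (W z ω * W x ω) ∂μ
                  = ∫ ω, h z ω * (((M x ω : ℝ)) ^ 2 * ((M y ω : ℝ)) * h y ω * ((M z ω : ℝ))
                      * 1 * 1 * 1) ∂μ :=
                    integral_congr_ae (Filter.Eventually.of_forall fun ω => by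
                      rcases hval x ω with e | e <;> simp only [hW_def, e] <;> ring)
                _ = 0 := extractH z (Sum.inl x) (Sum.inl y) (Sum.inr y) (Sum.inl z) (Sum.inl x)
                    (Sum.inl x) (Sum.inl x) (fun t => t ^ 2) id id id (fun _ => 1) (fun _ => 1)
                    (fun _ => 1) (measurable_id.pow_const 2) measurable_id measurable_id
                    measurable_id measurable_const measurable_const measurable_const
                    (by simp) (by simp) (by simp [Ne.symm hyz]) (by simp) (by simp) (by simp)
                    (by simp)
            rw [hstep]
            simp [Ne.symm hxz, Ne.symm hxy, hyz]
        · -- x ∉ {y, z, w} : zero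
          have hstep : ∫ ω, (W x ω * W y ω) * (W z ω * W w ω) ∂μ = 0 := by
            calc ∫ ω, (W x ω * W y ω) * (W z ω * W w ω) ∂μ
                = ∫ ω, h x ω * (((M x ω : ℝ)) * ((M y ω : ℝ)) * h y ω * ((M z ω : ℝ)) * h z ω
                    * ((M w ω : ℝ)) * h w ω) ∂μ :=
                  integral_congr_ae (Filter.Eventually.of_forall fun ω => by
                    simp only [hW_def]; ring)
              _ = 0 := extractH x (Sum.inl x) (Sum.inl y) (Sum.inr y) (Sum.inl z) (Sum.inr z)
                  (Sum.inl w) (Sum.inr w) id id id id id id id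
                  measurable_id measurable_id measurable_id measurable_id measurable_id
                  measurable_id measurable_id
                  (by simp) (by simp) (by simp [hxy]) (by simp) (by simp [hxz]) (by simp)
                  (by simp [hxw])
          rw [hstep]
          simp [hxy, hxz, hxw]
  -- summing the four pieces
  have stepw : ∀ (c : α) (A : Prop) [Decidable A] (t : ℝ),
      (∑ w : α, if c = w ∧ A then t else 0) = if A then t else 0 := by
    intro c A _ t
    by_cases hA : A <;> simp [hA]
  have stepd : ∀ (x : α) (A : Prop) [Decidable A],
      (∑ z : α, if A ∧ x ≠ z then e2 x * e2 z else 0)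
        = if A then e2 x * (∑ z, e2 z) - e2 x * e2 x else 0 := by
    intro x A _
    by_cases hA : A
    · simp only [hA, true_and, if_true]
      have hz : ∀ z : α, (if x ≠ z then e2 x * e2 z else 0)
          = e2 x * e2 z - (if x = z then e2 x * e2 z else 0) := fun z => by
        by_cases hxz : x = z <;> simp [hxz]
      rw [Finset.sum_congr rfl fun z _ => hz z, Finset.sum_sub_distrib, ← Finset.mul_sum,
        Finset.sum_ite_eq]
      simp
    · simp [hA]
  -- fourth moment of V
  have EV4 : ∫ ω, (∑ x, h x ω * (M x ω : ℝ)) ^ 4 ∂μ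
      = ∑ x, e4 x + 3 * ((∑ x, e2 x) ^ 2 - ∑ x, (e2 x) ^ 2) := by
    calc ∫ ω, (∑ x, h x ω * (M x ω : ℝ)) ^ 4 ∂μ
        = ∫ ω, ∑ x, ∑ y, ∑ z, ∑ w : α, (W x ω * W y ω) * (W z ω * W w ω) ∂μ :=
          integral_congr_ae (Filter.Eventually.of_forall fun ω => hV4pt ω)
      _ = ∑ x, ∑ y, ∑ z, ∑ w : α, ∫ ω, (W x ω * W y ω) * (W z ω * W w ω) ∂μ := by
          rw [integral_finset_sum _ fun x _ => integrable_finset_sum _ fun y _ =>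
            integrable_finset_sum _ fun z _ => integrable_finset_sum _ fun w _ => hInt4 x y z w]
          refine Finset.sum_congr rfl fun x _ => ?_
          rw [integral_finset_sum _ fun y _ => integrable_finset_sum _ fun z _ =>
            integrable_finset_sum _ fun w _ => hInt4 x y z w]
          refine Finset.sum_congr rfl fun y _ => ?_
          rw [integral_finset_sum _ fun z _ => integrable_finset_sum _ fun w _ => hInt4 x y z w]
          exact Finset.sum_congr rfl fun z _ =>
            integral_finset_sum _ fun w _ => hInt4 x y z w
      _ = ∑ x, ∑ y, ∑ z, ∑ w : α, ((if z = w ∧ y = z ∧ x = y then e4 x else 0)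
            + (if z = w ∧ x = y ∧ x ≠ z then e2 x * e2 z else 0)
            + (if y = w ∧ x = z ∧ x ≠ y then e2 x * e2 y else 0)
            + (if x = w ∧ y = z ∧ x ≠ y then e2 x * e2 y else 0)) :=
          Finset.sum_congr rfl fun x _ => Finset.sum_congr rfl fun y _ =>
            Finset.sum_congr rfl fun z _ => Finset.sum_congr rfl fun w _ => hT4 x y z w
      _ = ∑ x, e4 x + 3 * ((∑ x, e2 x) ^ 2 - ∑ x, (e2 x) ^ 2) := by
          have stepd0 : ∀ x : α, (∑ z : α, if x ≠ z then e2 x * e2 z else 0)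
              = e2 x * (∑ z, e2 z) - e2 x * e2 x := by
            intro x
            have hz : ∀ z : α, (if x ≠ z then e2 x * e2 z else 0)
                = e2 x * e2 z - (if x = z then e2 x * e2 z else 0) := fun z => by
              by_cases hxz : x = z <;> simp [hxz]
            rw [Finset.sum_congr rfl fun z _ => hz z, Finset.sum_sub_distrib,
              ← Finset.mul_sum, Finset.sum_ite_eq]
            simp
          have stepd : ∀ (x : α) (A : Prop) [Decidable A],
              (∑ z : α, if A ∧ x ≠ z then e2 x * e2 z else 0)
                = if A then e2 x * (∑ z, e2 z) - e2 x * e2 x else 0 := by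
            intro x A _
            by_cases hA : A
            · simp only [hA, true_and, if_true]
              exact stepd0 x
            · simp [hA]
          have p1 : (∑ x, ∑ y, ∑ z, ∑ w : α, if z = w ∧ y = z ∧ x = y then e4 x else 0)
              = ∑ x, e4 x := by
            refine Finset.sum_congr rfl fun x _ => ?_
            calc ∑ y, ∑ z, ∑ w : α, (if z = w ∧ y = z ∧ x = y then e4 x else 0)
                = ∑ y, ∑ z : α, (if y = z ∧ x = y then e4 x else 0) :=
                  Finset.sum_congr rfl fun y _ => Finset.sum_congr rfl fun z _ => stepw z _ _
              _ = ∑ y : α, (if x = y then e4 x else 0) :=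
                  Finset.sum_congr rfl fun y _ => stepw y _ _
              _ = e4 x := by simp
          have pend : ∀ (a : Finset.univ.sum e2 = Finset.univ.sum e2), True := fun _ => trivial
          have p2 : (∑ x, ∑ y, ∑ z, ∑ w : α, if z = w ∧ x = y ∧ x ≠ z then e2 x * e2 z else 0)
              = (∑ x, e2 x) ^ 2 - ∑ x, (e2 x) ^ 2 := by
            have hx : ∀ x : α, (∑ y, ∑ z, ∑ w : α,
                if z = w ∧ x = y ∧ x ≠ z then e2 x * e2 z else 0)
                = e2 x * (∑ z, e2 z) - e2 x * e2 x := by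
              intro x
              calc ∑ y, ∑ z, ∑ w : α, (if z = w ∧ x = y ∧ x ≠ z then e2 x * e2 z else 0)
                  = ∑ y, ∑ z : α, (if x = y ∧ x ≠ z then e2 x * e2 z else 0) :=
                    Finset.sum_congr rfl fun y _ => Finset.sum_congr rfl fun z _ => stepw z _ _
                _ = ∑ y : α, (if x = y then e2 x * (∑ z, e2 z) - e2 x * e2 x else 0) :=
                    Finset.sum_congr rfl fun y _ => stepd x _
                _ = e2 x * (∑ z, e2 z) - e2 x * e2 x := by simp
            rw [Finset.sum_congr rfl fun x _ => hx x, Finset.sum_sub_distrib,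
              ← Finset.sum_mul, pow_two]
            congr 1
            exact Finset.sum_congr rfl fun x _ => (pow_two (e2 x)).symm
          have p3 : (∑ x, ∑ y, ∑ z, ∑ w : α, if y = w ∧ x = z ∧ x ≠ y then e2 x * e2 y else 0)
              = (∑ x, e2 x) ^ 2 - ∑ x, (e2 x) ^ 2 := by
            have hx : ∀ x : α, (∑ y, ∑ z, ∑ w : α,
                if y = w ∧ x = z ∧ x ≠ y then e2 x * e2 y else 0)
                = e2 x * (∑ z, e2 z) - e2 x * e2 x := by
              intro x
              calc ∑ y, ∑ z, ∑ w : α, (if y = w ∧ x = z ∧ x ≠ y then e2 x * e2 y else 0)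
                  = ∑ y, ∑ z : α, (if x = z ∧ x ≠ y then e2 x * e2 y else 0) :=
                    Finset.sum_congr rfl fun y _ => Finset.sum_congr rfl fun z _ => stepw y _ _
                _ = ∑ y : α, (if x ≠ y then e2 x * e2 y else 0) :=
                    Finset.sum_congr rfl fun y _ => stepw x _ _
                _ = e2 x * (∑ z, e2 z) - e2 x * e2 x := stepd0 x
            rw [Finset.sum_congr rfl fun x _ => hx x, Finset.sum_sub_distrib,
              ← Finset.sum_mul, pow_two]
            congr 1
            exact Finset.sum_congr rfl fun x _ => (pow_two (e2 x)).symm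
          have p4 : (∑ x, ∑ y, ∑ z, ∑ w : α, if x = w ∧ y = z ∧ x ≠ y then e2 x * e2 y else 0)
              = (∑ x, e2 x) ^ 2 - ∑ x, (e2 x) ^ 2 := by
            have hx : ∀ x : α, (∑ y, ∑ z, ∑ w : α,
                if x = w ∧ y = z ∧ x ≠ y then e2 x * e2 y else 0)
                = e2 x * (∑ z, e2 z) - e2 x * e2 x := by
              intro x
              calc ∑ y, ∑ z, ∑ w : α, (if x = w ∧ y = z ∧ x ≠ y then e2 x * e2 y else 0)
                  = ∑ y, ∑ z : α, (if y = z ∧ x ≠ y then e2 x * e2 y else 0) :=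
                    Finset.sum_congr rfl fun y _ => Finset.sum_congr rfl fun z _ => stepw x _ _
                _ = ∑ y : α, (if x ≠ y then e2 x * e2 y else 0) :=
                    Finset.sum_congr rfl fun y _ => stepw y _ _
                _ = e2 x * (∑ z, e2 z) - e2 x * e2 x := stepd0 x
            rw [Finset.sum_congr rfl fun x _ => hx x, Finset.sum_sub_distrib,
              ← Finset.sum_mul, pow_two]
            congr 1
            exact Finset.sum_congr rfl fun x _ => (pow_two (e2 x)).symm
          simp only [Finset.sum_add_distrib]
          rw [p1, p2, p3, p4]
          ring
  -- variance formula
  have hXmeas : Measurable (fun ω => (∑ x, h x ω * (M x ω : ℝ)) ^ 2) :=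
    (Finset.measurable_sum Finset.univ fun x _ =>
      (hhmeas x).mul ((measurable_of_countable _).comp (hMmeas x))).pow_const 2
  have hIntV4 : Integrable (fun ω => (∑ x, h x ω * (M x ω : ℝ)) ^ 4) μ := by
    have : Integrable (fun ω => ∑ x, ∑ y, ∑ z, ∑ w : α,
        (W x ω * W y ω) * (W z ω * W w ω)) μ :=
      integrable_finset_sum _ fun x _ => integrable_finset_sum _ fun y _ =>
        integrable_finset_sum _ fun z _ => integrable_finset_sum _ fun w _ => hInt4 x y z w
    exact this.congr (Filter.Eventually.of_forall fun ω => (hV4pt ω).symm)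
  have hMem : MemLp (fun ω => (∑ x, h x ω * (M x ω : ℝ)) ^ 2) 2 μ := by
    refine (memLp_two_iff_integrable_sq hXmeas.aestronglyMeasurable).mpr ?_
    refine hIntV4.congr (Filter.Eventually.of_forall fun ω => ?_)
    simp only [Pi.pow_apply]
    ring
  have hvar : variance (fun ω => (∑ x, h x ω * (M x ω : ℝ)) ^ 2) μ
      = ∑ x, e4 x + 3 * ((∑ x, e2 x) ^ 2 - ∑ x, (e2 x) ^ 2) - (∑ x, e2 x) ^ 2 := by
    rw [variance_eq_sub hMem]
    have h1 : μ[(fun ω => (∑ x, h x ω * (M x ω : ℝ)) ^ 2) ^ 2]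
        = ∫ ω, (∑ x, h x ω * (M x ω : ℝ)) ^ 4 ∂μ := by
      refine integral_congr_ae (Filter.Eventually.of_forall fun ω => ?_)
      simp only [Pi.pow_apply]
      ring
    rw [h1, EV4, EV2]
  -- final algebra
  have hq_le : ∀ x, q x ≤ 1 := fun x => by
    rw [← hq1]
    exact Finset.single_le_sum (fun i _ => hq0 i) (Finset.mem_univ x)
  have hC0 : (0 : ℝ) ≤ ∑ x, q x ^ 2 := Finset.sum_nonneg fun x _ => sq_nonneg _
  have hC1 : (∑ x, q x ^ 2) ≤ 1 := by
    rw [← hq1]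
    exact Finset.sum_le_sum fun x _ => by nlinarith [hq0 x, hq_le x]
  have hD0 : (0 : ℝ) ≤ ∑ x, q x ^ 3 :=
    Finset.sum_nonneg fun x _ => pow_nonneg (hq0 x) 3
  have hE0 : (0 : ℝ) ≤ ∑ x, q x ^ 4 :=
    Finset.sum_nonneg fun x _ => pow_nonneg (hq0 x) 4
  have hSe2 : ∑ x, e2 x = m ^ 2 * (∑ x, q x ^ 2) + m := by
    have : ∀ x : α, e2 x = m ^ 2 * q x ^ 2 + m * q x := fun x => by
      simp only [he2_def]; ring
    rw [Finset.sum_congr rfl fun x _ => this x, Finset.sum_add_distrib,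
      ← Finset.mul_sum, ← Finset.mul_sum, hq1, mul_one]
  have hSe4 : ∑ x, e4 x = m ^ 4 * (∑ x, q x ^ 4) + 6 * m ^ 3 * (∑ x, q x ^ 3)
      + 7 * m ^ 2 * (∑ x, q x ^ 2) + m := by
    have : ∀ x : α, e4 x = m ^ 4 * q x ^ 4 + 6 * m ^ 3 * q x ^ 3
        + 7 * m ^ 2 * q x ^ 2 + m * q x := fun x => by
      simp only [he4_def]; ring
    rw [Finset.sum_congr rfl fun x _ => this x, Finset.sum_add_distrib,
      Finset.sum_add_distrib, Finset.sum_add_distrib,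
      ← Finset.mul_sum, ← Finset.mul_sum, ← Finset.mul_sum, ← Finset.mul_sum, hq1, mul_one]
  have hQe2 : ∑ x, (e2 x) ^ 2 = m ^ 4 * (∑ x, q x ^ 4) + 2 * m ^ 3 * (∑ x, q x ^ 3)
      + m ^ 2 * (∑ x, q x ^ 2) := by
    have : ∀ x : α, (e2 x) ^ 2 = m ^ 4 * q x ^ 4 + 2 * m ^ 3 * q x ^ 3
        + m ^ 2 * q x ^ 2 := fun x => by
      simp only [he2_def]; ring
    rw [Finset.sum_congr rfl fun x _ => this x, Finset.sum_add_distrib,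
      Finset.sum_add_distrib, ← Finset.mul_sum, ← Finset.mul_sum, ← Finset.mul_sum]
  rw [hvar, hSe4, hSe2, hQe2]
  have hm2C : m ^ 2 * (∑ x, q x ^ 2) ≤ m ^ 2 := by
    nlinarith [sq_nonneg m]
  nlinarith [mul_nonneg (mul_nonneg (mul_nonneg hm.le hm.le) hm.le) hD0,
    mul_nonneg (mul_nonneg (mul_nonneg (mul_nonneg hm.le hm.le) hm.le) hm.le) hE0,
    sq_nonneg m, mul_nonneg (mul_nonneg (mul_nonneg hm.le hm.le) hm.le) hC0, hm.le, hm2C]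
end

section
/- Let p be a probability mass function on a finite type α, let r be a positive integer, and let m > 0. Index pairs (s, x) ∈ {1,...,r} × α and set q_{s,x} = p_x / r. Let (M_{s,x}) be independent random variables with M_{s,x} distributed as Poisson(m · q_{s,x}), and let (h_{s,x}) be independent random variables uniform on {−1, +1}, independent of (M_{s,x}). Let V = Σ_{s,x} h_{s,x} · M_{s,x}. Then E[V²] = m + (m²/r) · C(p), and therefore E[ r(V² − m)/m² ] = C(p). -/
open MeasureTheory ProbabilityTheory

open MeasureTheory ProbabilityTheory

lemma aux_exp_summable (x : ℝ) : Summable (fun n : ℕ => x ^ n / n.factorial) :=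
  NormedSpace.expSeries_div_summable x

lemma aux_exp_tsum (x : ℝ) : ∑' n : ℕ, x ^ n / n.factorial = Real.exp x := by
  rw [Real.exp_eq_exp_ℝ, NormedSpace.exp_eq_tsum_div]

lemma aux_shift1 (x : ℝ) :
    (fun n : ℕ => ((n : ℝ) + 1) * x ^ (n + 1) / (n + 1).factorial)
      = fun n : ℕ => x * (x ^ n / n.factorial) := by
  funext n
  rw [Nat.factorial_succ]
  have h1 : (n.factorial : ℝ) ≠ 0 := Nat.cast_ne_zero.mpr n.factorial_ne_zero
  have h2 : ((n : ℝ) + 1) ≠ 0 := by positivity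
  push_cast
  field_simp
  ring

lemma aux_mean_summable (x : ℝ) : Summable (fun n : ℕ => (n : ℝ) * x ^ n / n.factorial) := by
  rw [← summable_nat_add_iff 1]
  have := (aux_exp_summable x).mul_left x
  rw [← aux_shift1 x] at this
  convert this using 2 with n
  · rfl
  push_cast
  ring

lemma aux_mean_tsum (x : ℝ) :
    ∑' n : ℕ, (n : ℝ) * x ^ n / n.factorial = x * Real.exp x := by
  rw [Summable.tsum_eq_zero_add (aux_mean_summable x)]
  simp only [Nat.cast_zero, zero_mul, zero_div, zero_add]
  have h : (fun n : ℕ => ((n + 1 : ℕ) : ℝ) * x ^ (n + 1) / (n + 1).factorial)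
      = fun n : ℕ => x * (x ^ n / n.factorial) := by
    rw [← aux_shift1 x]; funext n; push_cast; ring
  rw [h, tsum_mul_left, aux_exp_tsum]

lemma aux_shift2 (x : ℝ) :
    (fun n : ℕ => ((n : ℝ) + 2) * (((n : ℝ) + 2) - 1) * x ^ (n + 2) / (n + 2).factorial)
      = fun n : ℕ => x ^ 2 * (x ^ n / n.factorial) := by
  funext n
  rw [show n + 2 = (n + 1) + 1 from rfl, Nat.factorial_succ, Nat.factorial_succ]
  have h1 : (n.factorial : ℝ) ≠ 0 := Nat.cast_ne_zero.mpr n.factorial_ne_zero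
  have h2 : ((n : ℝ) + 1) ≠ 0 := by positivity
  have h3 : ((n : ℝ) + 1 + 1) ≠ 0 := by positivity
  push_cast
  field_simp
  ring

lemma aux_sq_summable (x : ℝ) :
    Summable (fun n : ℕ => (n : ℝ) * ((n : ℝ) - 1) * x ^ n / n.factorial) := by
  rw [← summable_nat_add_iff 2]
  have := (aux_exp_summable x).mul_left (x ^ 2)
  rw [← aux_shift2 x] at this
  convert this using 2 with n
  · rfl
  push_cast
  ring

lemma aux_sq_tsum (x : ℝ) :
    ∑' n : ℕ, (n : ℝ) * ((n : ℝ) - 1) * x ^ n / n.factorial = x ^ 2 * Real.exp x := by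
  rw [Summable.tsum_eq_zero_add (aux_sq_summable x)]
  have hs1 : Summable (fun n : ℕ =>
      ((n + 1 : ℕ) : ℝ) * (((n + 1 : ℕ) : ℝ) - 1) * x ^ (n + 1) / (n + 1).factorial) := by
    exact (summable_nat_add_iff (f := fun n : ℕ =>
      (n : ℝ) * ((n : ℝ) - 1) * x ^ n / n.factorial) 1).mpr (aux_sq_summable x)
  rw [Summable.tsum_eq_zero_add hs1]
  simp only [Nat.cast_zero, Nat.cast_add, Nat.cast_one, zero_mul, zero_div, zero_add]
  norm_num
  have h : (fun n : ℕ => ((n : ℝ) + 1 + 1) * ((n : ℝ) + 1) * x ^ (n + 1 + 1) / (n + 1 + 1).factorial)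
      = fun n : ℕ => x ^ 2 * (x ^ n / n.factorial) := by
    rw [← aux_shift2 x]; funext n; push_cast; ring_nf
  rw [h, tsum_mul_left, aux_exp_tsum]
open MeasureTheory ProbabilityTheory

lemma aux_nat_integral {Ω : Type*} {mΩ : MeasurableSpace Ω} (μ : Measure Ω)
    [IsProbabilityMeasure μ] (M : Ω → ℕ) (hM : Measurable M)
    (w : ℕ → ℝ) (hw : ∀ n, 0 ≤ w n)
    (hlaw : ∀ n, μ {ω | M ω = n} = ENNReal.ofReal (w n))
    (f : ℕ → ℝ) (hs : Summable (fun n => |f n| * w n)) :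
    Integrable (fun ω => f (M ω)) μ ∧ ∫ ω, f (M ω) ∂μ = ∑' n, f n * w n := by
  set ν := μ.map M with hν
  have hmap : ∀ n, ν {n} = ENNReal.ofReal (w n) := by
    intro n
    rw [hν, Measure.map_apply hM (measurableSet_singleton n)]
    have : M ⁻¹' {n} = {ω | M ω = n} := rfl
    rw [this, hlaw n]
  have hfm : Measurable f := measurable_from_nat
  have hint : Integrable f ν := by
    constructor
    · exact hfm.aestronglyMeasurable
    · have : HasFiniteIntegral f ν := by
        rw [hasFiniteIntegral_iff_norm, lintegral_countable']
        have heq : ∀ n : ℕ, ENNReal.ofReal ‖f n‖ * ν {n} = ENNReal.ofReal (|f n| * w n) := by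
          intro n
          rw [hmap n, Real.norm_eq_abs, ← ENNReal.ofReal_mul (abs_nonneg _)]
        simp only [heq]
        rw [← ENNReal.ofReal_tsum_of_nonneg (fun n => mul_nonneg (abs_nonneg _) (hw n)) hs]
        exact ENNReal.ofReal_lt_top
      exact this
  have h1 : Integrable (fun ω => f (M ω)) μ := by
    rw [← Function.comp_def]
    exact (integrable_map_measure hint.aestronglyMeasurable hM.aemeasurable).mp hint
  refine ⟨h1, ?_⟩
  rw [show (∫ ω, f (M ω) ∂μ) = ∫ n, f n ∂ν from
    (integral_map hM.aemeasurable hint.aestronglyMeasurable).symm]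
  rw [integral_countable' hint]
  congr 1
  funext n
  rw [measureReal_def, hmap n, smul_eq_mul, ENNReal.toReal_ofReal (hw n), mul_comm]

lemma aux_poisson_moments {Ω : Type*} {mΩ : MeasurableSpace Ω} (μ : Measure Ω)
    [IsProbabilityMeasure μ] (M : Ω → ℕ) (hM : Measurable M) (l : ℝ) (hl : 0 ≤ l)
    (hlaw : ∀ n : ℕ, μ {ω | M ω = n}
      = ENNReal.ofReal (Real.exp (-l) * l ^ n / n.factorial)) :
    (Integrable (fun ω => (M ω : ℝ)) μ) ∧ (∫ ω, (M ω : ℝ) ∂μ = l) ∧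
      (Integrable (fun ω => ((M ω : ℝ)) ^ 2) μ) ∧ (∫ ω, ((M ω : ℝ)) ^ 2 ∂μ = l + l ^ 2) := by
  set w : ℕ → ℝ := fun n => Real.exp (-l) * l ^ n / n.factorial with hwdef
  have hw : ∀ n, 0 ≤ w n := fun n =>
    div_nonneg (mul_nonneg (Real.exp_pos _).le (pow_nonneg hl n)) (Nat.cast_nonneg _)
  have hexp : Real.exp (-l) * Real.exp l = 1 := by
    rw [← Real.exp_add]; simp
  -- first moment
  have heq1 : (fun n : ℕ => |((n : ℕ) : ℝ)| * w n)
      = fun n : ℕ => Real.exp (-l) * ((n : ℝ) * l ^ n / n.factorial) := by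
    funext n; rw [abs_of_nonneg (Nat.cast_nonneg n), hwdef]; ring
  have hs1 : Summable (fun n : ℕ => |((n : ℕ) : ℝ)| * w n) := by
    rw [heq1]; exact (aux_mean_summable l).mul_left _
  obtain ⟨hi1, he1⟩ := aux_nat_integral μ M hM w hw hlaw (fun n => (n : ℝ)) hs1
  have he1' : ∫ ω, (M ω : ℝ) ∂μ = l := by
    rw [he1]
    have : (fun n : ℕ => ((n : ℕ) : ℝ) * w n)
        = fun n : ℕ => Real.exp (-l) * ((n : ℝ) * l ^ n / n.factorial) := by
      funext n; rw [hwdef]; ring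
    rw [this, tsum_mul_left, aux_mean_tsum]
    calc Real.exp (-l) * (l * Real.exp l) = l * (Real.exp (-l) * Real.exp l) := by ring
      _ = l := by rw [hexp, mul_one]
  -- second moment
  have heq2 : (fun n : ℕ => (((n : ℕ) : ℝ)) ^ 2 * w n)
      = fun n : ℕ => Real.exp (-l) * ((n : ℝ) * ((n : ℝ) - 1) * l ^ n / n.factorial
          + (n : ℝ) * l ^ n / n.factorial) := by
    funext n; rw [hwdef]; ring
  have hs2 : Summable (fun n : ℕ => |(((n : ℕ) : ℝ)) ^ 2| * w n) := by
    have : (fun n : ℕ => |(((n : ℕ) : ℝ)) ^ 2| * w n)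
        = fun n : ℕ => (((n : ℕ) : ℝ)) ^ 2 * w n := by
      funext n; rw [abs_of_nonneg (sq_nonneg _)]
    rw [this, heq2]
    exact ((aux_sq_summable l).add (aux_mean_summable l)).mul_left _
  obtain ⟨hi2, he2⟩ := aux_nat_integral μ M hM w hw hlaw (fun n => ((n : ℝ)) ^ 2) hs2
  refine ⟨hi1, he1', hi2, ?_⟩
  rw [he2, heq2, tsum_mul_left, Summable.tsum_add (aux_sq_summable l) (aux_mean_summable l),
    aux_sq_tsum, aux_mean_tsum]
  calc Real.exp (-l) * (l ^ 2 * Real.exp l + l * Real.exp l)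
      = (l + l ^ 2) * (Real.exp (-l) * Real.exp l) := by ring
    _ = l + l ^ 2 := by rw [hexp, mul_one]

/-- Let `p` be a pmf on a finite type `α`, `r` a positive integer and
`m > 0`. Index pairs `(s, x) ∈ {1,...,r} × α` (modeled as `Fin r × α`) and set
`q_{s,x} = p_x / r`. Let `(M_{s,x})` be independent with `M_{s,x} ~ Poisson(m · q_{s,x})`
and `(h_{s,x})` independent uniform on `{-1, +1}`, all mutually independent. Then for
`V = Σ_{s,x} h_{s,x} · M_{s,x}` we have `E[V²] = m + (m²/r) · C(p)` and hence
`E[r (V² - m) / m²] = C(p)`, where `C(p) = Σ_x p_x²`. -/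
theorem hashed_poissonized_sketch_unbiased
    {Ω : Type*} {mΩ : MeasurableSpace Ω} (μ : Measure Ω) [IsProbabilityMeasure μ]
    {α : Type*} [Fintype α]
    (p : α → ℝ) (hp0 : ∀ x, 0 ≤ p x) (hp1 : ∑ x, p x = 1)
    (r : ℕ) (hr : 0 < r) (m : ℝ) (hm : 0 < m)
    (M : Fin r × α → Ω → ℕ) (h : Fin r × α → Ω → ℝ)
    (hMmeas : ∀ i, Measurable (M i)) (hhmeas : ∀ i, Measurable (h i))
    (hval : ∀ i ω, h i ω = 1 ∨ h i ω = -1)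
    (hunif : ∀ i, μ {ω | h i ω = 1} = 1 / 2)
    (hMlaw : ∀ (i : Fin r × α) (n : ℕ), μ {ω | M i ω = n}
      = ENNReal.ofReal
          (Real.exp (-(m * (p i.2 / r))) * (m * (p i.2 / r)) ^ n / n.factorial))
    (hindep : iIndepFun
      (Sum.elim (fun i ω => ((M i ω : ℝ))) h) μ) :
    (∫ ω, (∑ i, h i ω * (M i ω : ℝ)) ^ 2 ∂μ = m + (m ^ 2 / r) * ∑ x, (p x) ^ 2) ∧
      (∫ ω, (r : ℝ) * ((∑ i, h i ω * (M i ω : ℝ)) ^ 2 - m) / m ^ 2 ∂μ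
        = ∑ x, (p x) ^ 2) := by
  classical
  have hrne : (r : ℝ) ≠ 0 := Nat.cast_ne_zero.mpr hr.ne'
  set g : (Fin r × α) ⊕ (Fin r × α) → Ω → ℝ := Sum.elim (fun i ω => ((M i ω : ℝ))) h with hg
  have hgmeas : ∀ k, Measurable (g k) := by
    rintro (i | i)
    · exact measurable_from_nat.comp (hMmeas i)
    · exact hhmeas i
  set lam : Fin r × α → ℝ := fun i => m * (p i.2 / r) with hlam
  have hlam0 : ∀ i, 0 ≤ lam i :=
    fun i => mul_nonneg hm.le (div_nonneg (hp0 i.2) (Nat.cast_nonneg r))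
  have hmom : ∀ i, (Integrable (fun ω => (M i ω : ℝ)) μ)
      ∧ (∫ ω, (M i ω : ℝ) ∂μ = lam i)
      ∧ (Integrable (fun ω => ((M i ω : ℝ)) ^ 2) μ)
      ∧ (∫ ω, ((M i ω : ℝ)) ^ 2 ∂μ = lam i + lam i ^ 2) :=
    fun i => aux_poisson_moments μ (M i) (hMmeas i) (lam i) (hlam0 i) (fun n => hMlaw i n)
  -- mean of h is 0
  have hhmean : ∀ i, ∫ ω, h i ω ∂μ = 0 := by
    intro i
    have hA : MeasurableSet {ω | h i ω = 1} := (hhmeas i) (measurableSet_singleton 1)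
    have hrepr : h i = fun ω =>
        2 * Set.indicator {ω | h i ω = 1} (fun _ => (1 : ℝ)) ω - 1 := by
      funext ω
      by_cases hω : h i ω = 1
      · simp only [Set.indicator_apply, Set.mem_setOf_eq, hω, if_true]; norm_num
      · have hv : h i ω = -1 := (hval i ω).resolve_left hω
        simp only [Set.indicator_apply, Set.mem_setOf_eq, hω, if_false, hv]; norm_num
    rw [hrepr, integral_sub (((integrable_const (1 : ℝ)).indicator hA).const_mul 2)
      (integrable_const 1), integral_const_mul, integral_indicator_const _ hA,
      integral_const, probReal_univ, measureReal_def, hunif i]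
    norm_num
  -- integrability and mean of h_i * M_i
  have hhMint : ∀ i, Integrable (fun ω => h i ω * (M i ω : ℝ)) μ := by
    intro i
    refine Integrable.mono' (hmom i).1
      ((hhmeas i).mul (hgmeas (Sum.inl i))).aestronglyMeasurable ?_
    filter_upwards with ω
    rw [norm_mul]
    rcases hval i ω with hv | hv <;> rw [hv] <;>
      simp [Real.norm_eq_abs, Nat.abs_cast]
  have hhMmean : ∀ i, ∫ ω, h i ω * (M i ω : ℝ) ∂μ = 0 := by
    intro i
    have hind : IndepFun (h i) (fun ω => (M i ω : ℝ)) μ :=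
      hindep.indepFun (show (Sum.inr i : (Fin r × α) ⊕ (Fin r × α)) ≠ Sum.inl i from
        Sum.inr_ne_inl)
    have := IndepFun.integral_mul_eq_mul_integral hind (hhmeas i).aestronglyMeasurable
      (hgmeas (Sum.inl i)).aestronglyMeasurable
    calc ∫ ω, h i ω * (M i ω : ℝ) ∂μ
        = (∫ ω, h i ω ∂μ) * ∫ ω, (M i ω : ℝ) ∂μ := this
      _ = 0 := by rw [hhmean i, zero_mul]
  -- independence of the products for i ≠ j
  have hFindep : ∀ i j, i ≠ j → IndepFun (fun ω => h i ω * (M i ω : ℝ))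
      (fun ω => h j ω * (M j ω : ℝ)) μ := by
    intro i j hij
    have h4 := hindep.indepFun_prodMk_prodMk hgmeas
      (Sum.inr i) (Sum.inl i) (Sum.inr j) (Sum.inl j)
      (by simp [hij]) (by simp) (by simp) (by simp [hij])
    exact h4.comp measurable_mul measurable_mul
  have hFint : ∀ i j, Integrable (fun ω => (h i ω * (M i ω : ℝ))
      * (h j ω * (M j ω : ℝ))) μ := by
    intro i j
    by_cases hij : i = j
    · subst hij
      have heq : (fun ω => (h i ω * (M i ω : ℝ)) * (h i ω * (M i ω : ℝ)))
          = fun ω => ((M i ω : ℝ)) ^ 2 := by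
        funext ω; rcases hval i ω with hv | hv <;> simp only [hv] <;> ring
      rw [heq]; exact (hmom i).2.2.1
    · exact (hFindep i j hij).integrable_mul (hhMint i) (hhMint j)
  have hFval : ∀ i j, ∫ ω, (h i ω * (M i ω : ℝ)) * (h j ω * (M j ω : ℝ)) ∂μ
      = if i = j then lam i + lam i ^ 2 else 0 := by
    intro i j
    by_cases hij : i = j
    · subst hij
      rw [if_pos rfl]
      calc ∫ ω, (h i ω * (M i ω : ℝ)) * (h i ω * (M i ω : ℝ)) ∂μ
          = ∫ ω, ((M i ω : ℝ)) ^ 2 ∂μ := by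
            refine integral_congr_ae (Filter.Eventually.of_forall fun ω => ?_)
            rcases hval i ω with hv | hv <;> simp only [hv] <;> ring
        _ = lam i + lam i ^ 2 := (hmom i).2.2.2
    · rw [if_neg hij]
      have := IndepFun.integral_mul_eq_mul_integral (hFindep i j hij)
        ((hhmeas i).mul (hgmeas (Sum.inl i))).aestronglyMeasurable
        ((hhmeas j).mul (hgmeas (Sum.inl j))).aestronglyMeasurable
      calc ∫ ω, (h i ω * (M i ω : ℝ)) * (h j ω * (M j ω : ℝ)) ∂μ
          = (∫ ω, h i ω * (M i ω : ℝ) ∂μ) * ∫ ω, h j ω * (M j ω : ℝ) ∂μ := this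
        _ = 0 := by rw [hhMmean i, zero_mul]
  -- expansion of the square
  have hVexp : ∀ ω, (∑ i, h i ω * (M i ω : ℝ)) ^ 2
      = ∑ i, ∑ j, (h i ω * (M i ω : ℝ)) * (h j ω * (M j ω : ℝ)) := by
    intro ω; rw [sq, Finset.sum_mul_sum]
  have hmain : ∫ ω, (∑ i, h i ω * (M i ω : ℝ)) ^ 2 ∂μ
      = m + (m ^ 2 / r) * ∑ x, (p x) ^ 2 := by
    calc ∫ ω, (∑ i, h i ω * (M i ω : ℝ)) ^ 2 ∂μ
        = ∫ ω, ∑ i, ∑ j, (h i ω * (M i ω : ℝ)) * (h j ω * (M j ω : ℝ)) ∂μ :=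
          integral_congr_ae (Filter.Eventually.of_forall fun ω => hVexp ω)
      _ = ∑ i, ∑ j, ∫ ω, (h i ω * (M i ω : ℝ)) * (h j ω * (M j ω : ℝ)) ∂μ := by
          rw [integral_finset_sum _
            (fun i _ => integrable_finset_sum _ (fun j _ => hFint i j))]
          exact Finset.sum_congr rfl fun i _ => integral_finset_sum _ fun j _ => hFint i j
      _ = ∑ i, (lam i + lam i ^ 2) := by
          refine Finset.sum_congr rfl fun i _ => ?_
          rw [Finset.sum_eq_single i
            (fun j _ hj => by rw [hFval i j, if_neg (fun hh => hj hh.symm)])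
            (fun hi => absurd (Finset.mem_univ i) hi)]
          rw [hFval i i, if_pos rfl]
      _ = m + (m ^ 2 / r) * ∑ x, (p x) ^ 2 := by
          rw [Fintype.sum_prod_type]
          have hinner : ∀ s : Fin r, ∑ x, (lam (s, x) + lam (s, x) ^ 2)
              = m / r + m ^ 2 / r ^ 2 * ∑ x, (p x) ^ 2 := by
            intro s
            rw [Finset.sum_add_distrib]
            have h1 : ∑ x, lam (s, x) = m / r := by
              calc ∑ x, lam (s, x) = ∑ x, (m / r) * p x :=
                    Finset.sum_congr rfl fun x _ => by rw [hlam]; ring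
                _ = (m / r) * ∑ x, p x := (Finset.mul_sum _ _ _).symm
                _ = m / r := by rw [hp1, mul_one]
            have h2 : ∑ x, lam (s, x) ^ 2 = m ^ 2 / r ^ 2 * ∑ x, (p x) ^ 2 := by
              calc ∑ x, lam (s, x) ^ 2 = ∑ x, (m ^ 2 / r ^ 2) * (p x) ^ 2 :=
                    Finset.sum_congr rfl fun x _ => by rw [hlam]; ring
                _ = (m ^ 2 / r ^ 2) * ∑ x, (p x) ^ 2 := (Finset.mul_sum _ _ _).symm
            rw [h1, h2]
          rw [Finset.sum_congr rfl fun s _ => hinner s, Finset.sum_const,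
            Finset.card_univ, Fintype.card_fin, nsmul_eq_mul]
          field_simp
  refine ⟨hmain, ?_⟩
  have hVint : Integrable (fun ω => (∑ i, h i ω * (M i ω : ℝ)) ^ 2) μ := by
    have heq : (fun ω => (∑ i, h i ω * (M i ω : ℝ)) ^ 2)
        = fun ω => ∑ i, ∑ j, (h i ω * (M i ω : ℝ)) * (h j ω * (M j ω : ℝ)) :=
      funext hVexp
    rw [heq]
    exact integrable_finset_sum _ fun i _ => integrable_finset_sum _ fun j _ => hFint i j
  have hrw : (fun ω => (r : ℝ) * ((∑ i, h i ω * (M i ω : ℝ)) ^ 2 - m) / m ^ 2)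
      = fun ω => ((r : ℝ) / m ^ 2) * (∑ i, h i ω * (M i ω : ℝ)) ^ 2
        - (r : ℝ) * m / m ^ 2 := by
    funext ω; field_simp
  rw [hrw, integral_sub (hVint.const_mul _) (integrable_const _), integral_const_mul,
    integral_const, probReal_univ, one_smul, hmain]
  field_simp
  ring
end

section
/- Let p be a probability mass function on a finite type α and r a positive integer. Let X and X' be independent random variables each with law p, let s and s' be independent random variables each uniform on {1, ..., r}, and let (h_{t,x})_{(t,x) ∈ {1,...,r} × α} be a family of independent random variables each uniform on {−1, +1}, with (X, X', s, s') and (h_{t,x}) all mutually independent. Then Pr[ h_{s,X} = h_{s',X'} ] = 1/2 + C(p)/(2r); equivalently, C(p) = 2r · ( Pr[ h_{s,X} = h_{s',X'} ] − 1/2 ). -/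
open Finset

section aux

variable {γ : Type} [Fintype γ] [DecidableEq γ]

lemma card_match (a b : γ) (hab : a ≠ b) :
    (Finset.univ.filter fun h : γ → Bool => h a = h b).card
      = (Finset.univ.filter fun h : γ → Bool => ¬ (h a = h b)).card := by
  apply Finset.card_nbij' (fun h => Function.update h a (!(h a)))
    (fun h => Function.update h a (!(h a)))
  · intro h hh
    simp only [mem_coe, mem_filter, mem_univ, true_and] at hh ⊢
    rw [Function.update_self, Function.update_of_ne (Ne.symm hab)]
    simp [hh]
  · intro h hh
    simp only [mem_coe, mem_filter, mem_univ, true_and] at hh ⊢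
    rw [Function.update_self, Function.update_of_ne (Ne.symm hab)]
    cases hu : h a <;> cases hv : h b <;> simp_all
  · intro h _
    ext c
    by_cases hc : c = a
    · subst hc; simp [Function.update_self]
    · simp [Function.update_of_ne hc]
  · intro h _
    ext c
    by_cases hc : c = a
    · subst hc; simp [Function.update_self]
    · simp [Function.update_of_ne hc]

lemma hash_sum (a b : γ) :
    ∑ h : γ → Bool, (Fintype.card (γ → Bool) : ENNReal)⁻¹ * (if h a = h b then (1:ENNReal) else 0)
      = if a = b then 1 else 1/2 := by
  rw [← Finset.mul_sum, Finset.sum_boole]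
  have hcard : (Fintype.card (γ → Bool) : ENNReal) ≠ 0 := by
    exact_mod_cast Fintype.card_ne_zero
  have hcardt : (Fintype.card (γ → Bool) : ENNReal) ≠ ⊤ := ENNReal.natCast_ne_top _
  by_cases hab : a = b
  · subst hab
    simpa using ENNReal.inv_mul_cancel hcard hcardt
  · rw [if_neg hab]
    have h2 : ((Finset.univ.filter fun h : γ → Bool => h a = h b).card : ENNReal) * 2
        = (Fintype.card (γ → Bool) : ENNReal) := by
      have h := Finset.card_filter_add_card_filter_not
        (s := (Finset.univ : Finset (γ → Bool))) (p := fun h => h a = h b)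
      rw [← card_match a b hab, Finset.card_univ] at h
      rw [mul_two]
      exact_mod_cast h
    rw [ENNReal.eq_div_iff (by norm_num) (by norm_num)]
    rw [mul_comm, mul_assoc, h2, ENNReal.inv_mul_cancel hcard hcardt]

lemma pair_ind (u v : Bool) :
    (if ((1:ℝ), (1:ℝ)) = ((if u then (1:ℝ) else -1), (if v then (1:ℝ) else -1))
      then (1:ENNReal) else 0)
    + (if ((-1:ℝ), (-1:ℝ)) = ((if u then (1:ℝ) else -1), (if v then (1:ℝ) else -1))
      then (1:ENNReal) else 0)
    = if u = v then 1 else 0 := by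
  cases u <;> cases v <;> norm_num [Prod.ext_iff]

lemma ite_split (p : Prop) [Decidable p] :
    (if p then (1:ENNReal) else 1/2) = 1/2 + if p then 1/2 else 0 := by
  split
  · rw [ENNReal.add_halves 1]
  · rw [add_zero]

end aux

section main

variable {α : Type} [Fintype α] [DecidableEq α] (P : PMF α) (r : ℕ) [NeZero r]

noncomputable def M (P : PMF α) (r : ℕ) [NeZero r] : PMF (ℝ × ℝ) :=
  P.bind fun x => P.bind fun x' =>
    (PMF.uniformOfFintype (Fin r)).bind fun s =>
    (PMF.uniformOfFintype (Fin r)).bind fun s' =>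
    (PMF.uniformOfFintype (Fin r × α → Bool)).bind fun h =>
    PMF.pure ((if h (s, x) then (1 : ℝ) else -1), (if h (s', x') then (1 : ℝ) else -1))

lemma hM (z : ℝ × ℝ) : M P r z
    = ∑ x, P x * ∑ x', P x' * ∑ s : Fin r, ((r : ENNReal))⁻¹ *
      ∑ s' : Fin r, ((r : ENNReal))⁻¹ *
      ∑ h : Fin r × α → Bool, (Fintype.card (Fin r × α → Bool) : ENNReal)⁻¹ *
      (if z = ((if h (s, x) then (1 : ℝ) else -1), (if h (s', x') then (1 : ℝ) else -1))
        then 1 else 0) := by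
  simp only [M, PMF.bind_apply, tsum_fintype, PMF.uniformOfFintype_apply, PMF.pure_apply,
    Fintype.card_fin]
  congr!

lemma M_support {z : ℝ × ℝ} (hz : z ∈ (M P r).support) :
    z = ((1:ℝ), (1:ℝ)) ∨ z = ((1:ℝ), (-1:ℝ)) ∨ z = ((-1:ℝ), (1:ℝ)) ∨ z = ((-1:ℝ), (-1:ℝ)) := by
  simp only [M, PMF.support_bind, PMF.support_pure, Set.mem_iUnion, Set.mem_singleton_iff] at hz
  obtain ⟨x, -, x', -, s, -, s', -, h, -, rfl⟩ := hz
  cases h (s, x) <;> cases h (s', x') <;> simp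

lemma key : (M P r).toMeasure {z : ℝ × ℝ | z.1 = z.2}
    = 1/2 + (∑ x, (P x) ^ 2) * (2 * (r : ENNReal))⁻¹ := by
  have hS : MeasurableSet {z : ℝ × ℝ | z.1 = z.2} :=
    measurableSet_eq_fun measurable_fst measurable_snd
  rw [PMF.toMeasure_apply _ hS]
  rw [tsum_eq_sum (s := ({((1:ℝ),(1:ℝ)), ((-1:ℝ),(-1:ℝ))} : Finset (ℝ × ℝ))) ?h0]
  case h0 =>
    intro z hz
    simp only [Finset.mem_insert, Finset.mem_singleton, not_or] at hz
    by_cases hzS : z ∈ {z : ℝ × ℝ | z.1 = z.2}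
    · rw [Set.indicator_of_mem hzS]
      by_contra h0
      have hmem : z ∈ (M P r).support := PMF.mem_support_iff _ z |>.2 h0
      rcases M_support P r hmem with h | h | h | h
      · exact hz.1 h
      · rw [h] at hzS; norm_num [Set.mem_setOf_eq] at hzS
      · rw [h] at hzS; norm_num [Set.mem_setOf_eq] at hzS
      · exact hz.2 h
    · exact Set.indicator_of_notMem hzS _
  rw [Finset.sum_pair (by norm_num [Prod.ext_iff] : ((1:ℝ),(1:ℝ)) ≠ ((-1:ℝ),(-1:ℝ)))]
  rw [Set.indicator_of_mem (by norm_num : ((1:ℝ),(1:ℝ)) ∈ {z : ℝ × ℝ | z.1 = z.2}),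
    Set.indicator_of_mem (by norm_num : ((-1:ℝ),(-1:ℝ)) ∈ {z : ℝ × ℝ | z.1 = z.2})]
  have hsum1 : ∑ a, P a = 1 := by rw [← tsum_fintype (L := SummationFilter.unconditional _)]; exact P.tsum_coe
  have hrne : ((r : ENNReal)) ≠ 0 := by exact_mod_cast NeZero.ne r
  have hrnt : ((r : ENNReal)) ≠ ⊤ := ENNReal.natCast_ne_top r
  have hsumr : ∑ _s : Fin r, ((r : ENNReal))⁻¹ = 1 := by
    rw [Finset.sum_const, Finset.card_univ, Fintype.card_fin, nsmul_eq_mul,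
      ENNReal.mul_inv_cancel hrne hrnt]
  -- combine the two point masses
  have hcomb : M P r ((1:ℝ),(1:ℝ)) + M P r ((-1:ℝ),(-1:ℝ))
      = ∑ x, P x * ∑ x', P x' * ∑ s : Fin r, ((r : ENNReal))⁻¹ *
        ∑ s' : Fin r, ((r : ENNReal))⁻¹ *
        (if (s, x) = (s', x') then (1:ENNReal) else 1/2) := by
    rw [hM, hM, ← Finset.sum_add_distrib]
    refine Finset.sum_congr rfl fun x _ => ?_
    rw [← mul_add, ← Finset.sum_add_distrib]
    congr 1
    refine Finset.sum_congr rfl fun x' _ => ?_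
    rw [← mul_add, ← Finset.sum_add_distrib]
    congr 1
    refine Finset.sum_congr rfl fun s _ => ?_
    rw [← mul_add, ← Finset.sum_add_distrib]
    congr 1
    refine Finset.sum_congr rfl fun s' _ => ?_
    rw [← mul_add, ← Finset.sum_add_distrib]
    congr 1
    rw [Finset.sum_congr rfl fun h _ => by rw [← mul_add, pair_ind]]
    exact hash_sum _ _
  rw [hcomb]
  -- now evaluate the nested sum
  have hinner : ∀ (x x' : α) (s : Fin r),
      ∑ s' : Fin r, ((r : ENNReal))⁻¹ * (if (s, x) = (s', x') then (1:ENNReal) else 1/2)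
        = 1/2 + if x = x' then ((r : ENNReal))⁻¹ * (1/2) else 0 := by
    intro x x' s
    have : ∀ s' : Fin r,
        ((r : ENNReal))⁻¹ * (if (s, x) = (s', x') then (1:ENNReal) else 1/2)
          = ((r : ENNReal))⁻¹ * (1/2)
            + (if s = s' then (if x = x' then ((r : ENNReal))⁻¹ * (1/2) else 0) else 0) := by
      intro s'
      rw [ite_split, mul_add]
      congr 1
      by_cases h1 : s = s' <;> by_cases h2 : x = x' <;>
        simp [Prod.ext_iff, h1, h2, mul_ite]
    rw [Finset.sum_congr rfl fun s' _ => this s', Finset.sum_add_distrib,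
      ← Finset.sum_mul, hsumr, one_mul, Finset.sum_ite_eq, if_pos (Finset.mem_univ s)]
  have houter : ∀ x : α,
      P x * ∑ x', P x' * ∑ s : Fin r, ((r : ENNReal))⁻¹ *
        ∑ s' : Fin r, ((r : ENNReal))⁻¹ * (if (s, x) = (s', x') then (1:ENNReal) else 1/2)
      = P x * (1/2) + P x * P x * (((r : ENNReal))⁻¹ * (1/2)) := by
    intro x
    have h1 : ∀ x' : α, ∑ s : Fin r, ((r : ENNReal))⁻¹ *
        ∑ s' : Fin r, ((r : ENNReal))⁻¹ * (if (s, x) = (s', x') then (1:ENNReal) else 1/2)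
        = 1/2 + if x = x' then ((r : ENNReal))⁻¹ * (1/2) else 0 := by
      intro x'
      rw [Finset.sum_congr rfl fun s _ => by rw [hinner x x' s], ← Finset.sum_mul, hsumr, one_mul]
    rw [Finset.sum_congr rfl fun x' _ => by rw [h1 x']]
    have h2 : ∑ x', P x' * (1/2 + if x = x' then ((r : ENNReal))⁻¹ * (1/2) else 0)
        = 1/2 + P x * (((r : ENNReal))⁻¹ * (1/2)) := by
      simp only [mul_add, mul_ite, mul_zero]
      rw [Finset.sum_add_distrib, ← Finset.sum_mul, hsum1, one_mul,
        Finset.sum_ite_eq, if_pos (Finset.mem_univ x)]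
    rw [h2, mul_add, ← mul_assoc]
  rw [Finset.sum_congr rfl fun x _ => houter x]
  rw [Finset.sum_add_distrib]
  rw [← Finset.sum_mul]
  rw [hsum1]
  rw [one_mul]
  rw [← Finset.sum_mul]
  congr 1
  have hsq : (∑ x, P x * P x) = ∑ x, P x ^ 2 := Finset.sum_congr rfl fun x _ => (sq (P x)).symm
  have hc : ((r:ENNReal))⁻¹ * (1/2) = (2 * (r : ENNReal))⁻¹ := by
    rw [ENNReal.mul_inv (Or.inl (by norm_num)) (Or.inl (by norm_num)), one_div, mul_comm]
  rw [hsq, hc]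

end main




/-- Let `p` be a pmf on a finite type `α` and `r ≥ 1`. Draw `X, X' ~ p`
independently, salts `s, s'` independently uniform on `{1,...,r}` (modeled as `Fin r`),
and an independent family of uniform `{-1,+1}`-valued hash values `h_{t,x}` (modeled as a
uniform random function `Fin r × α → Bool`, with `b ↦ if b then 1 else -1` giving the
`±1` hash values). Then `Pr[h_{s,X} = h_{s',X'}] = 1/2 + C(p)/(2r)`; equivalently,
`C(p) = 2r (Pr[h_{s,X} = h_{s',X'}] - 1/2)`, where `C(p) = Σ_x p_x²`. -/
theorem salted_hash_collision_probability {α : Type} [Fintype α] [DecidableEq α]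
    (P : PMF α) (r : ℕ) [NeZero r] :
    (do
        let x ← P
        let x' ← P
        let s ← PMF.uniformOfFintype (Fin r)
        let s' ← PMF.uniformOfFintype (Fin r)
        let h : Fin r × α → Bool ← PMF.uniformOfFintype (Fin r × α → Bool)
        pure ((if h (s, x) then (1 : ℝ) else -1), (if h (s', x') then (1 : ℝ) else -1))
        : PMF (ℝ × ℝ)).toMeasure {z : ℝ × ℝ | z.1 = z.2}
        = ENNReal.ofReal (1 / 2 + (∑ x, (P x).toReal ^ 2) / (2 * r)) ∧
      ∑ x, (P x).toReal ^ 2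
        = 2 * r * (((do
            let x ← P
            let x' ← P
            let s ← PMF.uniformOfFintype (Fin r)
            let s' ← PMF.uniformOfFintype (Fin r)
            let h : Fin r × α → Bool ← PMF.uniformOfFintype (Fin r × α → Bool)
            pure ((if h (s, x) then (1 : ℝ) else -1), (if h (s', x') then (1 : ℝ) else -1))
            : PMF (ℝ × ℝ)).toMeasure {z : ℝ × ℝ | z.1 = z.2}).toReal - 1 / 2) := by
  have hkey : (do
        let x ← P
        let x' ← P
        let s ← PMF.uniformOfFintype (Fin r)
        let s' ← PMF.uniformOfFintype (Fin r)
        let h : Fin r × α → Bool ← PMF.uniformOfFintype (Fin r × α → Bool)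
        pure ((if h (s, x) then (1 : ℝ) else -1), (if h (s', x') then (1 : ℝ) else -1))
        : PMF (ℝ × ℝ)).toMeasure {z : ℝ × ℝ | z.1 = z.2}
      = 1/2 + (∑ x, (P x) ^ 2) * (2 * (r : ENNReal))⁻¹ := key P r
  have hCEt : (∑ x, (P x) ^ 2) ≠ ⊤ := by
    refine (ENNReal.sum_lt_top.2 fun x _ => ?_).ne
    exact ENNReal.pow_lt_top (PMF.apply_lt_top P x)
  have hvt : (1/2 + (∑ x, (P x) ^ 2) * (2 * (r : ENNReal))⁻¹) ≠ ⊤ := by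
    refine ENNReal.add_ne_top.2 ⟨by norm_num, ENNReal.mul_ne_top hCEt (ENNReal.inv_ne_top.2 ?_)⟩
    simp [NeZero.ne r]
  have hrR : ((r : ℝ)) ≠ 0 := by exact_mod_cast NeZero.ne r
  have htr : (1/2 + (∑ x, (P x) ^ 2) * (2 * (r : ENNReal))⁻¹).toReal
      = 1 / 2 + (∑ x, (P x).toReal ^ 2) / (2 * r) := by
    rw [ENNReal.toReal_add (by norm_num) (ENNReal.mul_ne_top hCEt (by simp [NeZero.ne r]))]
    rw [ENNReal.toReal_mul, ENNReal.toReal_inv, ENNReal.toReal_mul]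
    rw [ENNReal.toReal_sum (fun x _ => ENNReal.pow_ne_top (PMF.apply_ne_top P x))]
    simp only [ENNReal.toReal_pow, ENNReal.toReal_ofNat, ENNReal.toReal_natCast]
    rw [div_eq_mul_inv]
    field_simp
    norm_num
  constructor
  · rw [hkey, ← htr, ENNReal.ofReal_toReal hvt]
  · rw [hkey, htr]
    field_simp
    ring
end
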